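/- arXiv:1307.4390 — 2 statements merged into one kernel-verified Lean document; each statement's English description precedes it below -/
import Mathlib

section
/- Let N > 1 be a fundamental discriminant, χ_D = (N/·) the associated Kronecker symbol character mod N, k an integer, and for a positive divisor m of N let η_m = γ_m·[[N_m,0],[0,1]], where N_m is the m-part of N and γ_m ∈ SL₂(ℤ) satisfies γ_m ≡ S (mod N_m²) and γ_m ≡ I (mod (N/N_m)²). Then for f ∈ A(N,k,χ_D) and any positive divisor m of N, f|_k η_m² = χ_m(-1)·χ'_m(N_m)·f, where χ_m = Π_{p|m} χ_p and χ'_m = Π_{p|N, p∤m} χ_p is the complementary part of the decomposition χ_D = Π_p χ_p. -/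
noncomputable section

open Complex

/-- The upper half plane, as a subset of `ℂ`. -/
def UHP : Set ℂ := {z | 0 < z.im}

/-- Möbius action of a real 2×2 matrix on `ℂ`. -/
def moeb (M : Matrix (Fin 2) (Fin 2) ℝ) (z : ℂ) : ℂ :=
  ((M 0 0 : ℝ) * z + (M 0 1 : ℝ)) / ((M 1 0 : ℝ) * z + (M 1 1 : ℝ))

/-- The weight-`k` slash operator:
`(f|_k M)(τ) = det(M)^{k/2} (cτ+d)^{-k} f(Mτ)`. -/
def slash (k : ℤ) (M : Matrix (Fin 2) (Fin 2) ℝ) (f : ℂ → ℂ) : ℂ → ℂ :=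
  fun z => ((M.det ^ ((k : ℝ) / 2) : ℝ) : ℂ) *
    ((M 1 0 : ℝ) * z + (M 1 1 : ℝ)) ^ (-k) * f (moeb M z)

/-- Slash operator for an integral matrix. -/
def islash (k : ℤ) (M : Matrix (Fin 2) (Fin 2) ℤ) (f : ℂ → ℂ) : ℂ → ℂ :=
  slash k (M.map (Int.cast : ℤ → ℝ)) f

/-- The Kronecker symbol `(a/2)`. -/
def kron2 (a : ℤ) : ℤ :=
  if a % 2 = 0 then 0 else if a % 8 = 1 ∨ a % 8 = 7 then 1 else -1

/-- The Kronecker symbol `(a/n)`. -/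
def kron (a : ℤ) (n : ℤ) : ℤ :=
  if n = 0 then (if a = 1 ∨ a = -1 then 1 else 0)
  else
    (if n < 0 ∧ a < 0 then -1 else 1) *
    kron2 a ^ (n.natAbs.factorization 2) *
    jacobiSym a (n.natAbs / 2 ^ (n.natAbs.factorization 2))

/-- `N > 1` is a (positive) fundamental discriminant. -/
def IsFundDisc (N : ℤ) : Prop :=
  (N % 4 = 1 ∧ Squarefree N) ∨
    (∃ m : ℤ, N = 4 * m ∧ Squarefree m ∧ (m % 4 = 2 ∨ m % 4 = 3))

/-- The `p`-component `χ_p` of the character `χ_D = (N/·)` for a prime `p ∣ N`: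
for odd `p`, `χ_p = (·/p)` is the Legendre symbol; for `p = 2` it is the character from
the table, determined by `N₁ = N/4` modulo `8`. -/
def chiP (N : ℤ) (p : ℕ) : ℤ → ℤ := fun n =>
  if p = 2 then
    (if (N / 4) % 4 = 3 then kron (-4) n
     else if (N / 4) % 8 = 2 then kron 8 n
     else if (N / 4) % 8 = 6 then kron (-8) n
     else 1)
  else jacobiSym n p

/-- `χ_m = Π_{p ∣ m} χ_p`. -/
def chiPart (N : ℤ) (m : ℕ) : ℤ → ℤ := fun n => ∏ p ∈ m.primeFactors, chiP N p n

/-- `χ'_m = Π_{p ∣ N, p ∤ m} χ_p`. -/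
def chiCoPart (N : ℤ) (m : ℕ) : ℤ → ℤ := fun n =>
  ∏ p ∈ (N.natAbs.primeFactors \ m.primeFactors), chiP N p n

/-- `N_m`, the `m`-part of `N`: the largest divisor of `N` all of whose prime factors
divide `m`. -/
def Npart (N : ℤ) (m : ℕ) : ℕ :=
  ∏ p ∈ (N.natAbs.primeFactors ∩ m.primeFactors), p ^ (N.natAbs.factorization p)

/-- Congruence of integral matrices modulo `t`. -/
def CongMod (t : ℤ) (A B : Matrix (Fin 2) (Fin 2) ℤ) : Prop :=
  ∀ i j, t ∣ (A i j - B i j)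

/-- The matrix `η_m = γ_m · [[N_m, 0], [0, 1]]` (as a real matrix). -/
def etaMat (γ : Matrix (Fin 2) (Fin 2) ℤ) (t : ℕ) : Matrix (Fin 2) (Fin 2) ℝ :=
  (γ.map (Int.cast : ℤ → ℝ)) * !![(t : ℝ), 0; 0, 1]

/-- `f ∈ A(N, k, χ)`: weakly holomorphic modular form of level `N`, weight `k` and
character `χ`: holomorphic on the upper half plane, transforming under `Γ₀(N)` with
character `χ`, and meromorphic (at most exponential growth) at all cusps. -/
def IsWeaklyHol (N : ℕ) (k : ℤ) (χ : ℤ → ℤ) (f : ℂ → ℂ) : Prop :=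
  DifferentiableOn ℂ f UHP ∧
  (∀ M : Matrix (Fin 2) (Fin 2) ℤ, M.det = 1 → (N : ℤ) ∣ M 1 0 →
    ∀ z ∈ UHP, islash k M f z = (χ (M 1 1) : ℂ) * f z) ∧
  (∀ M : Matrix (Fin 2) (Fin 2) ℤ, M.det = 1 →
    ∃ C A B : ℝ, ∀ z ∈ UHP, B ≤ z.im → ‖islash k M f z‖ ≤ C * Real.exp (A * z.im))



section AuxProofs
open ZMod

lemma kron_def' (a n : ℤ) (hn : n ≠ 0) : kron a n =
    (if n < 0 ∧ a < 0 then -1 else 1) *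
    kron2 a ^ (n.natAbs.factorization 2) *
    jacobiSym a (n.natAbs / 2 ^ (n.natAbs.factorization 2)) := if_neg hn

lemma natAbs_odd {n : ℤ} (hn : n % 2 = 1) : ¬ (2 ∣ n.natAbs) := by
  intro h
  have h2 : ((2:ℤ)).natAbs ∣ n.natAbs := h
  have : (2:ℤ) ∣ n := Int.natAbs_dvd_natAbs.mp h2
  omega

lemma kron_odd (a n : ℤ) (hn : n % 2 = 1) :
    kron a n = (if n < 0 ∧ a < 0 then -1 else 1) * jacobiSym a n.natAbs := by
  have hn0 : n ≠ 0 := by omega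
  rw [kron_def' a n hn0, Nat.factorization_eq_zero_of_not_dvd (natAbs_odd hn)]
  simp

lemma gcd_two_odd {u : ℕ} (hu : ¬ 2 ∣ u) : Int.gcd 2 u = 1 := by
  have : Nat.Coprime 2 u := (Nat.prime_two.coprime_iff_not_dvd).mpr hu
  simpa [Int.gcd] using this

lemma jacobi_two_sq {u : ℕ} (hu : ¬ 2 ∣ u) : jacobiSym 2 u * jacobiSym 2 u = 1 := by
  have := jacobiSym.sq_one (a := 2) (b := u) (by simpa using gcd_two_odd hu)
  nlinarith [this]

lemma kron_even_bottom (a n : ℤ) (hn : n ≠ 0) (hn2 : n % 2 = 0) (ha : a % 2 = 0) :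
    kron a n = 0 := by
  have h2 : 2 ∣ n.natAbs := Int.natAbs_dvd_natAbs.mpr (show ((2:ℤ)) ∣ n by omega)
  have he : 0 < n.natAbs.factorization 2 :=
    Nat.Prime.factorization_pos_of_dvd Nat.prime_two (Int.natAbs_ne_zero.mpr hn) h2
  rw [kron_def' a n hn]
  have : kron2 a = 0 := by simp [kron2, ha]
  rw [this, zero_pow (by omega)]
  ring

lemma chi4_neg (n : ℤ) : χ₄ (-n : ℤ) = - χ₄ n := by
  have h1 : ((-n : ℤ) : ZMod 4) = ((-1 : ℤ) : ZMod 4) * ((n:ℤ) : ZMod 4) := by push_cast; ring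
  rw [h1, map_mul, χ₄_int_three_mod_four (by norm_num : (-1:ℤ) % 4 = 3)]
  ring

lemma chi8_neg (n : ℤ) : χ₈ (-n : ℤ) = χ₈ n := by
  have h1 : ((-n : ℤ) : ZMod 8) = ((-1 : ℤ) : ZMod 8) * ((n:ℤ) : ZMod 8) := by push_cast; ring
  have h2 : χ₈ (-1 : ℤ) = 1 := by rw [χ₈_int_eq_if_mod_eight]; norm_num
  rw [h1, map_mul, h2]; ring

lemma chi8'_neg (n : ℤ) : χ₈' (-n : ℤ) = - χ₈' n := by
  have h1 : ((-n : ℤ) : ZMod 8) = ((-1 : ℤ) : ZMod 8) * ((n:ℤ) : ZMod 8) := by push_cast; ring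
  have h2 : χ₈' (-1 : ℤ) = -1 := by rw [χ₈'_int_eq_if_mod_eight]; norm_num
  rw [h1, map_mul, h2]; ring

lemma chi4_natAbs_cast (u : ℕ) : (χ₄ (u : ℕ) : ℤ) = χ₄ ((u:ℤ)) := by norm_cast
lemma chi8_natAbs_cast (u : ℕ) : (χ₈ (u : ℕ) : ℤ) = χ₈ ((u:ℤ)) := by norm_cast
lemma chi8'_natAbs_cast (u : ℕ) : (χ₈' (u : ℕ) : ℤ) = χ₈' ((u:ℤ)) := by norm_cast

lemma kron_neg_four (n : ℤ) : kron (-4) n = χ₄ n := by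
  rcases eq_or_ne n 0 with rfl | hn0
  · rw [χ₄_int_eq_if_mod_four]; norm_num [kron]
  rcases Int.emod_two_eq n with hn2 | hn2
  · rw [kron_even_bottom _ _ hn0 hn2 (by norm_num), χ₄_int_eq_if_mod_four, if_pos hn2]
  · rw [kron_odd _ _ hn2]
    have hu : ¬ 2 ∣ n.natAbs := natAbs_odd hn2
    have huodd : Odd n.natAbs := Nat.odd_iff.mpr (by omega)
    have hj : jacobiSym (-4) n.natAbs = χ₄ ((n.natAbs : ℤ)) := by
      calc jacobiSym (-4) n.natAbs = jacobiSym (-1) n.natAbs * (jacobiSym 2 n.natAbs * jacobiSym 2 n.natAbs) := by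
            rw [show ((-4 : ℤ)) = -1 * (2 * 2) by norm_num, jacobiSym.mul_left, jacobiSym.mul_left]
        _ = jacobiSym (-1) n.natAbs := by rw [jacobi_two_sq hu, mul_one]
        _ = χ₄ ((n.natAbs : ℤ)) := by rw [jacobiSym.at_neg_one huodd, chi4_natAbs_cast]
    rw [hj]
    rcases le_or_gt 0 n with hpos | hneg
    · rw [if_neg (by omega), Int.natAbs_of_nonneg hpos, one_mul]
    · have hna : ((n.natAbs : ℤ)) = -n := Int.ofNat_natAbs_of_nonpos (by omega)
      rw [if_pos ⟨hneg, by norm_num⟩, hna, chi4_neg]; ring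

lemma kron_eight (n : ℤ) : kron 8 n = χ₈ n := by
  rcases eq_or_ne n 0 with rfl | hn0
  · rw [χ₈_int_eq_if_mod_eight]; norm_num [kron]
  rcases Int.emod_two_eq n with hn2 | hn2
  · rw [kron_even_bottom _ _ hn0 hn2 (by norm_num), χ₈_int_eq_if_mod_eight, if_pos hn2]
  · rw [kron_odd _ _ hn2]
    have hu : ¬ 2 ∣ n.natAbs := natAbs_odd hn2
    have huodd : Odd n.natAbs := Nat.odd_iff.mpr (by omega)
    have hj : jacobiSym 8 n.natAbs = χ₈ ((n.natAbs : ℤ)) := by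
      calc jacobiSym 8 n.natAbs = jacobiSym 2 n.natAbs * (jacobiSym 2 n.natAbs * jacobiSym 2 n.natAbs) := by
            rw [show ((8 : ℤ)) = 2 * (2 * 2) by norm_num, jacobiSym.mul_left, jacobiSym.mul_left]
        _ = jacobiSym 2 n.natAbs := by rw [jacobi_two_sq hu, mul_one]
        _ = χ₈ ((n.natAbs : ℤ)) := by rw [jacobiSym.at_two huodd, chi8_natAbs_cast]
    rw [hj]
    rcases le_or_gt 0 n with hpos | hneg
    · rw [if_neg (by omega), Int.natAbs_of_nonneg hpos, one_mul]
    · have hna : ((n.natAbs : ℤ)) = -n := Int.ofNat_natAbs_of_nonpos (by omega)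
      rw [if_neg (by norm_num), hna, chi8_neg, one_mul]

lemma kron_neg_eight (n : ℤ) : kron (-8) n = χ₈' n := by
  rcases eq_or_ne n 0 with rfl | hn0
  · rw [χ₈'_int_eq_if_mod_eight]; norm_num [kron]
  rcases Int.emod_two_eq n with hn2 | hn2
  · rw [kron_even_bottom _ _ hn0 hn2 (by norm_num), χ₈'_int_eq_if_mod_eight, if_pos hn2]
  · rw [kron_odd _ _ hn2]
    have hu : ¬ 2 ∣ n.natAbs := natAbs_odd hn2
    have huodd : Odd n.natAbs := Nat.odd_iff.mpr (by omega)
    have hj : jacobiSym (-8) n.natAbs = χ₈' ((n.natAbs : ℤ)) := by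
      calc jacobiSym (-8) n.natAbs = jacobiSym (-2) n.natAbs * (jacobiSym 2 n.natAbs * jacobiSym 2 n.natAbs) := by
            rw [show ((-8 : ℤ)) = -2 * (2 * 2) by norm_num, jacobiSym.mul_left, jacobiSym.mul_left]
        _ = jacobiSym (-2) n.natAbs := by rw [jacobi_two_sq hu, mul_one]
        _ = χ₈' ((n.natAbs : ℤ)) := by rw [jacobiSym.at_neg_two huodd, chi8'_natAbs_cast]
    rw [hj]
    rcases le_or_gt 0 n with hpos | hneg
    · rw [if_neg (by omega), Int.natAbs_of_nonneg hpos, one_mul]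
    · have hna : ((n.natAbs : ℤ)) = -n := Int.ofNat_natAbs_of_nonpos (by omega)
      rw [if_pos ⟨hneg, by norm_num⟩, hna, chi8'_neg]; ring

lemma jacobi_prod_right (a : ℤ) (s : Finset ℕ) (h : ∀ p ∈ s, p ≠ 0) :
    jacobiSym a (∏ p ∈ s, p) = ∏ p ∈ s, jacobiSym a p := by
  classical
  induction s using Finset.induction_on with
  | empty => simp [jacobiSym.one_right]
  | @insert x t hx ih =>
    rw [Finset.prod_insert hx, Finset.prod_insert hx,
      jacobiSym.mul_right' a (h x (Finset.mem_insert_self x t))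
        (Finset.prod_ne_zero_iff.mpr fun p hp => h p (Finset.mem_insert_of_mem hp)),
      ih (fun p hp => h p (Finset.mem_insert_of_mem hp))]

lemma jacobi_primeFactors (a : ℤ) {w : ℕ} (hw : Squarefree w) :
    jacobiSym a w = ∏ p ∈ w.primeFactors, jacobiSym a p := by
  conv_lhs => rw [← Nat.prod_primeFactors_of_squarefree hw]
  exact jacobi_prod_right a _ (fun p hp => (Nat.prime_of_mem_primeFactors hp).ne_zero)

lemma kron2_eq (a : ℤ) : kron2 a = ZMod.χ₈ a := (ZMod.χ₈_int_eq_if_mod_eight a).symm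

lemma decomp_one (N : ℤ) (hN : 1 < N) (h4 : N % 4 = 1) (hsf : Squarefree N)
    (n : ℤ) (hn : n ≠ 0) :
    kron N n = ∏ p ∈ N.natAbs.primeFactors, chiP N p n := by
  set Nn := N.natAbs with hNndef
  have hNn : (Nn : ℤ) = N := Int.natAbs_of_nonneg (by omega)
  have hNn4 : Nn % 4 = 1 := by omega
  have hNn2 : Nn % 2 = 1 := by omega
  have hNnodd : Odd Nn := Nat.odd_iff.mpr hNn2
  have hsfn : Squarefree Nn := Int.squarefree_natAbs.mpr hsf
  -- RHS
  have hRHS : ∏ p ∈ Nn.primeFactors, chiP N p n = jacobiSym n Nn := by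
    rw [jacobi_primeFactors n hsfn]
    refine Finset.prod_congr rfl fun p hp => ?_
    have hp2 : p ≠ 2 := by
      intro h
      have := Nat.dvd_of_mem_primeFactors hp
      rw [h] at this
      omega
    simp [chiP, hp2]
  rw [hRHS]
  -- decompose n
  have hna0 : n.natAbs ≠ 0 := Int.natAbs_ne_zero.mpr hn
  set e := n.natAbs.factorization 2 with he
  set u := n.natAbs / 2 ^ e with hudef
  have hsplit : n.natAbs = 2 ^ e * u := (Nat.ordProj_mul_ordCompl_eq_self n.natAbs 2).symm
  have hu2 : ¬ 2 ∣ u := Nat.not_dvd_ordCompl Nat.prime_two hna0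
  have huodd : Odd u := Nat.odd_iff.mpr (by omega)
  -- LHS
  rw [kron_def' _ _ hn, if_neg (by omega), one_mul, kron2_eq]
  -- core: J(natAbs n | Nn)
  have hcore : jacobiSym ((n.natAbs : ℤ)) Nn = χ₈ (N : ℤ) ^ e * jacobiSym N u := by
    rw [hsplit]
    push_cast
    rw [jacobiSym.mul_left, jacobiSym.pow_left, jacobiSym.at_two hNnodd]
    have hrec : jacobiSym ((u : ℤ)) Nn = jacobiSym ((Nn : ℤ)) u :=
      (jacobiSym.quadratic_reciprocity_one_mod_four hNn4 huodd).symm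
    rw [hrec, ← hNn]
    norm_cast
  have hcore2 : jacobiSym n Nn = χ₈ (N : ℤ) ^ e * jacobiSym N u := by
    rcases le_or_gt 0 n with hpos | hneg
    · conv_lhs => rw [show n = ((n.natAbs : ℤ)) from (Int.natAbs_of_nonneg hpos).symm]
      exact hcore
    · have hneg' : jacobiSym n Nn = χ₄ (Nn : ℕ) * jacobiSym ((n.natAbs : ℤ)) Nn := by
        have h := jacobiSym.neg ((n.natAbs : ℤ)) (b := Nn) hNnodd
        rw [show -((n.natAbs : ℤ)) = n by omega] at h
        exact h
      rw [hneg', χ₄_nat_one_mod_four hNn4, one_mul, hcore]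
  rw [hcore2]

-- J(4|u) = 1, J(8|u) = χ₈ u for odd u
lemma jacobi_four (u : ℕ) (hu : ¬ 2 ∣ u) : jacobiSym 4 u = 1 := by
  rw [show (4:ℤ) = 2 * 2 by norm_num, jacobiSym.mul_left, jacobi_two_sq hu]

lemma jacobi_eight (u : ℕ) (hu : ¬ 2 ∣ u) (huodd : Odd u) :
    jacobiSym 8 u = χ₈ ((u : ℤ)) := by
  rw [show (8:ℤ) = 2 * (2 * 2) by norm_num, jacobiSym.mul_left, jacobiSym.mul_left,
    jacobi_two_sq hu, mul_one, jacobiSym.at_two huodd, chi8_natAbs_cast]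

lemma decomp_two (N m₀ : ℤ) (hN : 1 < N) (hNm : N = 4 * m₀) (hsf : Squarefree m₀)
    (h23 : m₀ % 4 = 2 ∨ m₀ % 4 = 3) (n : ℤ) (hn2 : n % 2 = 1) :
    kron N n = ∏ p ∈ N.natAbs.primeFactors, chiP N p n := by
  have hm0 : 0 < m₀ := by omega
  have hN4 : N / 4 = m₀ := by omega
  have hsfm : Squarefree m₀.natAbs := Int.squarefree_natAbs.mpr hsf
  have hmnat : (m₀.natAbs : ℤ) = m₀ := Int.natAbs_of_nonneg (by omega)
  set u := n.natAbs with hu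
  have hun : (u : ℤ) = n ∨ (u : ℤ) = -n := by
    rcases Int.natAbs_eq n with h | h
    · exact Or.inl h.symm
    · right; omega
  have hu2 : ¬ 2 ∣ u := natAbs_odd hn2
  have huodd : Odd u := Nat.odd_iff.mpr (by omega)
  have hkron : kron N n = jacobiSym N u := by
    rw [kron_odd _ _ hn2, if_neg (by omega), one_mul]
  rcases h23 with h2 | h3
  case inr =>
    -- m₀ ≡ 3 mod 4
    set w := m₀.natAbs with hwdef
    have hw4 : w % 4 = 3 := by omega
    have hwodd : Odd w := Nat.odd_iff.mpr (by omega)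
    have hw0 : w ≠ 0 := by omega
    have hNnat : N.natAbs = 4 * w := by
      have : (N.natAbs : ℤ) = N := Int.natAbs_of_nonneg (by omega)
      omega
    have hpf : N.natAbs.primeFactors = insert 2 w.primeFactors := by
      rw [hNnat, Nat.primeFactors_mul (by norm_num) hw0,
        show (4:ℕ) = 2 ^ 2 by norm_num,
        Nat.primeFactors_prime_pow (by norm_num) Nat.prime_two]
      ext p; simp [or_comm]
    have h2w : 2 ∉ w.primeFactors := by
      intro h
      exact hu2 (by simpa using absurd (Nat.dvd_of_mem_primeFactors h) (by omega))
    -- RHS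
    have hRHS : ∏ p ∈ N.natAbs.primeFactors, chiP N p n
        = χ₄ n * jacobiSym n w := by
      rw [hpf, Finset.prod_insert h2w]
      congr 1
      · have hchi2 : chiP N 2 n = kron (-4) n := by
          simp only [chiP]
          rw [if_pos (trivial : True), hN4, if_pos h3]
        rw [hchi2, kron_neg_four]
      · rw [jacobi_primeFactors n hsfm]
        exact Finset.prod_congr rfl fun p hp => by
          have : p ≠ 2 := fun h => h2w (h ▸ hp)
          simp [chiP, this]
    -- LHS
    have hLHS : kron N n = jacobiSym ((w : ℤ)) u := by
      rw [hkron, show N = ((4 : ℤ)) * w by rw [hmnat]; omega,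
        jacobiSym.mul_left, jacobi_four u hu2, one_mul]
    -- reduce sign
    have haux : χ₄ n * jacobiSym n w = χ₄ ((u:ℤ)) * jacobiSym ((u:ℤ)) w := by
      rcases hun with h | h
      · rw [← h]
      · have hn' : n = -((u:ℤ)) := by omega
        have hj : jacobiSym n w = χ₄ ((w:ℕ)) * jacobiSym ((u:ℤ)) w := by
          rw [hn']; exact jacobiSym.neg _ hwodd
        rw [hj, hn', chi4_neg, χ₄_nat_three_mod_four hw4]; ring
    rw [hLHS, hRHS, haux]
    -- reciprocity
    have hu4 : u % 4 = 1 ∨ u % 4 = 3 := by omega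
    rcases hu4 with h4 | h4
    · rw [jacobiSym.quadratic_reciprocity_one_mod_four' hwodd h4,
        χ₄_int_one_mod_four (by omega : ((u:ℤ)) % 4 = 1), one_mul]
    · rw [jacobiSym.quadratic_reciprocity_three_mod_four hw4 h4,
        χ₄_int_three_mod_four (by omega : ((u:ℤ)) % 4 = 3)]
      ring
  case inl =>
    -- m₀ ≡ 2 mod 4
    set w := m₀.natAbs / 2 with hwdef
    have hw2 : m₀.natAbs = 2 * w := by omega
    have hwodd : Odd w := Nat.odd_iff.mpr (by
      rcases Nat.even_or_odd w with he | ho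
      · exfalso
        have : (4:ℕ) ∣ m₀.natAbs := by
          obtain ⟨t, ht⟩ := he
          omega
        have : (2:ℕ) * 2 ∣ m₀.natAbs := by omega
        exact (Nat.squarefree_iff_prime_squarefree.mp hsfm) 2 Nat.prime_two
          (by simpa [sq] using this)
      · exact Nat.odd_iff.mp ho)
    have hwo : w % 2 = 1 := Nat.odd_iff.mp hwodd
    have hw0 : w ≠ 0 := by omega
    have hsfw : Squarefree w := hsfm.squarefree_of_dvd ⟨2, by omega⟩
    have hNnat : N.natAbs = 8 * w := by
      have : (N.natAbs : ℤ) = N := Int.natAbs_of_nonneg (by omega)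
      omega
    have hpf : N.natAbs.primeFactors = insert 2 w.primeFactors := by
      rw [hNnat, Nat.primeFactors_mul (by norm_num) hw0,
        show (8:ℕ) = 2 ^ 3 by norm_num,
        Nat.primeFactors_prime_pow (by norm_num) Nat.prime_two]
      ext p; simp [or_comm]
    have h2w : 2 ∉ w.primeFactors := by
      intro h
      have := Nat.dvd_of_mem_primeFactors h
      omega
    have hprodw : ∏ p ∈ w.primeFactors, chiP N p n = jacobiSym n w := by
      rw [jacobi_primeFactors n hsfw]
      exact Finset.prod_congr rfl fun p hp => by
        have : p ≠ 2 := fun h => h2w (h ▸ hp)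
        simp [chiP, this]
    have hLHS : kron N n = χ₈ ((u:ℤ)) * jacobiSym ((w : ℤ)) u := by
      rw [hkron, show N = ((8 : ℤ)) * w by omega,
        jacobiSym.mul_left, jacobi_eight u hu2 huodd]
    have hm8 : m₀ % 8 = 2 ∨ m₀ % 8 = 6 := by omega
    rcases hm8 with h8 | h8
    · -- χ₂ = χ₈, w % 4 = 1
      have hw4 : w % 4 = 1 := by omega
      have hRHS : ∏ p ∈ N.natAbs.primeFactors, chiP N p n
          = χ₈ n * jacobiSym n w := by
        rw [hpf, Finset.prod_insert h2w, hprodw]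
        congr 1
        have hchi2 : chiP N 2 n = kron 8 n := by
          simp only [chiP]
          rw [if_pos (trivial : True), hN4, if_neg (by omega : ¬ (m₀ % 4 = 3)), if_pos h8]
        rw [hchi2, kron_eight]
      have haux : χ₈ n * jacobiSym n w = χ₈ ((u:ℤ)) * jacobiSym ((u:ℤ)) w := by
        rcases hun with h | h
        · rw [← h]
        · have hn' : n = -((u:ℤ)) := by omega
          have hj : jacobiSym n w = χ₄ ((w:ℕ)) * jacobiSym ((u:ℤ)) w := by
            rw [hn']; exact jacobiSym.neg _ hwodd
          rw [hj, hn', chi8_neg, χ₄_nat_one_mod_four hw4, one_mul]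
      rw [hRHS, haux, hLHS,
        jacobiSym.quadratic_reciprocity_one_mod_four hw4 huodd]
    · -- χ₂ = χ₈', w % 4 = 3
      have hw4 : w % 4 = 3 := by omega
      have hRHS : ∏ p ∈ N.natAbs.primeFactors, chiP N p n
          = χ₈' n * jacobiSym n w := by
        rw [hpf, Finset.prod_insert h2w, hprodw]
        congr 1
        have hchi2 : chiP N 2 n = kron (-8) n := by
          simp only [chiP]
          rw [if_pos (trivial : True), hN4, if_neg (by omega : ¬ (m₀ % 4 = 3)),
            if_neg (by omega : ¬ (m₀ % 8 = 2)), if_pos h8]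
        rw [hchi2, kron_neg_eight]
      have haux : χ₈' n * jacobiSym n w
          = χ₄ ((u:ℤ)) * χ₈ ((u:ℤ)) * jacobiSym ((u:ℤ)) w := by
        rcases hun with h | h
        · rw [← h, χ₈'_int_eq_χ₄_mul_χ₈]
        · have hn' : n = -((u:ℤ)) := by omega
          have hj : jacobiSym n w = χ₄ ((w:ℕ)) * jacobiSym ((u:ℤ)) w := by
            rw [hn']; exact jacobiSym.neg _ hwodd
          rw [hj, hn', chi8'_neg, χ₄_nat_three_mod_four hw4, χ₈'_int_eq_χ₄_mul_χ₈]
          ring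
      rw [hRHS, haux, hLHS]
      have hu4 : u % 4 = 1 ∨ u % 4 = 3 := by omega
      rcases hu4 with h4 | h4
      · rw [jacobiSym.quadratic_reciprocity_one_mod_four' hwodd h4,
          χ₄_int_one_mod_four (by omega : ((u:ℤ)) % 4 = 1), one_mul]
      · rw [jacobiSym.quadratic_reciprocity_three_mod_four hw4 h4,
          χ₄_int_three_mod_four (by omega : ((u:ℤ)) % 4 = 3)]
        ring

lemma decomp (N : ℤ) (hN : 1 < N) (hfund : IsFundDisc N) (n : ℤ) (hn : n ≠ 0)
    (hodd : N % 2 = 0 → n % 2 = 1) :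
    kron N n = ∏ p ∈ N.natAbs.primeFactors, chiP N p n := by
  rcases hfund with ⟨h4, hsf⟩ | ⟨m₀, hNm, hsf, h23⟩
  · exact decomp_one N hN h4 hsf n hn
  · exact decomp_two N m₀ hN hNm hsf h23 n (hodd (by omega))

-- Npart structure
section npart
variable (N : ℤ) (m : ℕ)

lemma npart_eq (hm : 0 < m) (hmN : (m:ℤ) ∣ N) (hN : 1 < N) :
    Npart N m = ∏ p ∈ m.primeFactors, p ^ (N.natAbs.factorization p) := by
  have hsub : m.primeFactors ⊆ N.natAbs.primeFactors :=
    Nat.primeFactors_mono (Int.natAbs_dvd_natAbs.mpr (by simpa using hmN))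
      (by positivity <;> omega)
  rw [Npart, Finset.inter_eq_right.mpr hsub]
end npart

lemma prod_part (Nn : ℕ) (hNn : Nn ≠ 0) (s : Finset ℕ) (hs : s ⊆ Nn.primeFactors) :
    (∏ p ∈ Nn.primeFactors \ s, p ^ (Nn.factorization p)) *
    (∏ p ∈ s, p ^ (Nn.factorization p)) = Nn := by
  rw [Finset.prod_sdiff hs]
  conv_rhs => rw [← Nat.factorization_prod_pow_eq_self hNn]
  rfl

lemma not_dvd_part (p : ℕ) (hp : p.Prime) (s : Finset ℕ) (hps : p ∉ s)
    (f : ℕ → ℕ) (hf : ∀ q ∈ s, q.Prime) : ¬ p ∣ ∏ q ∈ s, q ^ (f q) := by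
  intro h
  obtain ⟨q, hq, hdvd⟩ := (Prime.dvd_finset_prod_iff hp.prime _).mp h
  have := hp.dvd_of_dvd_pow hdvd
  have := ((Nat.prime_dvd_prime_iff_eq hp (hf q hq)).mp this)
  exact hps (this ▸ hq)

lemma int_mod_eq_of_dvd {p a b : ℤ} (h : p ∣ b - a) : a % p = b % p :=
  Int.modEq_iff_dvd.mpr h

lemma chi4_sq (a : ℤ) (ha : a % 2 = 1) : χ₄ a * χ₄ a = 1 := by
  rw [χ₄_int_eq_if_mod_four, if_neg (by omega)]
  split_ifs <;> norm_num

lemma chi8_sq (a : ℤ) (ha : a % 2 = 1) : χ₈ a * χ₈ a = 1 := by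
  rw [χ₈_int_eq_if_mod_eight, if_neg (by omega)]
  split_ifs <;> norm_num

lemma chi8'_sq (a : ℤ) (ha : a % 2 = 1) : χ₈' a * χ₈' a = 1 := by
  rw [χ₈'_int_eq_if_mod_eight, if_neg (by omega)]
  split_ifs <;> norm_num

lemma chi4_period {a b : ℤ} (h : (4:ℤ) ∣ b - a) : χ₄ a = χ₄ b := by
  have : ((a : ZMod 4)) = ((b : ZMod 4)) := (ZMod.intCast_eq_intCast_iff _ _ _).mpr
    (Int.modEq_iff_dvd.mpr h)
  rw [this]

lemma chi8_period {a b : ℤ} (h : (8:ℤ) ∣ b - a) : χ₈ a = χ₈ b := by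
  have : ((a : ZMod 8)) = ((b : ZMod 8)) := (ZMod.intCast_eq_intCast_iff _ _ _).mpr
    (Int.modEq_iff_dvd.mpr h)
  rw [this]

lemma chi8'_period {a b : ℤ} (h : (8:ℤ) ∣ b - a) : χ₈' a = χ₈' b := by
  have : ((a : ZMod 8)) = ((b : ZMod 8)) := (ZMod.intCast_eq_intCast_iff _ _ _).mpr
    (Int.modEq_iff_dvd.mpr h)
  rw [this]

lemma chiP_odd (N : ℤ) (p : ℕ) (hp : p ≠ 2) (n : ℤ) : chiP N p n = jacobiSym n p := by
  simp [chiP, hp]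

lemma chiP_two_cases (N : ℤ) : chiP N 2 = (fun n : ℤ => χ₄ n) ∨ chiP N 2 = (fun n : ℤ => χ₈ n)
    ∨ chiP N 2 = (fun n : ℤ => χ₈' n) ∨ chiP N 2 = fun _ : ℤ => 1 := by
  have hch : chiP N 2 = fun n : ℤ =>
      (if (N / 4) % 4 = 3 then kron (-4) n
       else if (N / 4) % 8 = 2 then kron 8 n
       else if (N / 4) % 8 = 6 then kron (-8) n
       else 1) := by
    funext n; simp [chiP]
  rw [hch]
  split_ifs with h1 h2 h3
  · exact Or.inl (by funext n; simp [kron_neg_four])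
  · exact Or.inr (Or.inl (by funext n; simp [kron_eight]))
  · exact Or.inr (Or.inr (Or.inl (by funext n; simp [kron_neg_eight])))
  · exact Or.inr (Or.inr (Or.inr rfl))

lemma chiP_two_mult (N a b : ℤ) : chiP N 2 (a * b) = chiP N 2 a * chiP N 2 b := by
  rcases chiP_two_cases N with h | h | h | h <;> rw [h] <;>
    simp [Int.cast_mul, map_mul]

lemma chiP_two_period (N : ℤ) {a b : ℤ} (h : (8:ℤ) ∣ b - a) : chiP N 2 a = chiP N 2 b := by
  rcases chiP_two_cases N with hc | hc | hc | hc <;> rw [hc]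
  · exact chi4_period (dvd_trans (by norm_num) h)
  · exact chi8_period h
  · exact chi8'_period h

lemma chiP_two_sq (N : ℤ) (a : ℤ) (ha : a % 2 = 1) : chiP N 2 a * chiP N 2 a = 1 := by
  rcases chiP_two_cases N with hc | hc | hc | hc <;> rw [hc]
  · exact chi4_sq a ha
  · exact chi8_sq a ha
  · exact chi8'_sq a ha
  · norm_num

lemma chiP_two_one (N : ℤ) : chiP N 2 1 = 1 := by
  rcases chiP_two_cases N with hc | hc | hc | hc <;> rw [hc]
  · exact χ₄_int_one_mod_four (by norm_num)
  · exact (by rw [χ₈_int_eq_if_mod_eight]; norm_num : χ₈ ((1:ℤ)) = 1)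
  · exact (by rw [χ₈'_int_eq_if_mod_eight]; norm_num : χ₈' ((1:ℤ)) = 1)

lemma charval (N : ℤ) (hN : 1 < N) (hfund : IsFundDisc N) (m : ℕ) (hm : 0 < m)
    (hmN : (m:ℤ) ∣ N) (x : ℤ)
    (hQ2 : ((Npart N m : ℤ))^2 ∣ x + 1)
    (hT2 : (N / (Npart N m : ℤ))^2 ∣ (Npart N m : ℤ) * x - 1) :
    kron N x = chiPart N m (-1) * chiCoPart N m ((Npart N m : ℤ)) := by
  classical
  set Nn := N.natAbs with hNndef
  have hNn : (Nn : ℤ) = N := Int.natAbs_of_nonneg (by omega)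
  have hNn0 : Nn ≠ 0 := by omega
  have hmdvd : m ∣ Nn := by
    have := Int.natAbs_dvd_natAbs.mpr hmN
    simpa using this
  have hsub : m.primeFactors ⊆ Nn.primeFactors := Nat.primeFactors_mono hmdvd hNn0
  set Q := Npart N m with hQdef
  have hQeq : Q = ∏ p ∈ m.primeFactors, p ^ (Nn.factorization p) := by
    rw [hQdef, Npart, Finset.inter_eq_right.mpr hsub]
  set T := ∏ p ∈ Nn.primeFactors \ m.primeFactors, p ^ (Nn.factorization p) with hTdef
  have hQT : T * Q = Nn := by rw [hQeq]; exact prod_part Nn hNn0 _ hsub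
  have hQ0 : 0 < Q := by
    rw [hQeq]
    exact Finset.prod_pos fun p hp => pow_pos (Nat.prime_of_mem_primeFactors (hsub hp)).pos _
  have hT0 : 0 < T := by
    rw [hTdef]
    exact Finset.prod_pos fun p hp =>
      pow_pos (Nat.prime_of_mem_primeFactors (Finset.mem_sdiff.mp hp).1).pos _
  have hNQT : N = (T : ℤ) * (Q : ℤ) := by rw [← hNn, ← hQT]; push_cast; ring
  have hNdivQ : N / (Q : ℤ) = (T : ℤ) := by
    rw [hNQT]; exact Int.mul_ediv_cancel _ (by exact_mod_cast hQ0.ne')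
  rw [hNdivQ] at hT2
  -- x ≠ 0
  have hx0 : x ≠ 0 := by
    rintro rfl
    have h1 : (Q:ℤ)^2 ∣ 1 := by simpa using hQ2
    have h2 : (T:ℤ)^2 ∣ 1 := by
      have : (T:ℤ)^2 ∣ -1 := by simpa using hT2
      exact (dvd_neg.mp (by simpa using this.neg_right))
    have hQ1 : (Q:ℤ)^2 ≤ 1 := Int.le_of_dvd one_pos h1
    have hT1 : (T:ℤ)^2 ≤ 1 := Int.le_of_dvd one_pos h2
    have : (1:ℤ) ≤ Q := by exact_mod_cast hQ0
    have : (1:ℤ) ≤ T := by exact_mod_cast hT0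
    nlinarith [hNQT, hN]
  -- parity of x when N even
  have hfour : 2 ∣ Nn → 4 ∣ Nn := by
    intro h2
    rcases hfund with ⟨h4, _⟩ | ⟨m₀, hNm, _, _⟩
    · exfalso
      have : (2:ℤ) ∣ N := by rw [← hNn]; exact_mod_cast Int.natCast_dvd_natCast.mpr h2
      omega
    · have : (4:ℤ) ∣ N := ⟨m₀, hNm⟩
      have : ((4:ℕ):ℤ) ∣ (Nn:ℤ) := by rw [hNn]; exact_mod_cast this
      exact_mod_cast Int.natCast_dvd_natCast.mp this
  have hv2 : 2 ∣ Nn → 2 ≤ Nn.factorization 2 := fun h2 =>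
    (Nat.Prime.pow_dvd_iff_le_factorization Nat.prime_two hNn0).mp
      (by simpa [sq] using (by simpa using hfour h2 : 2^2 ∣ Nn))
  have hQ4 : 2 ∈ m.primeFactors → 4 ∣ Q := by
    intro h2m
    have h2Nn : 2 ∣ Nn := Nat.dvd_of_mem_primeFactors (hsub h2m)
    have hdvd : 2 ^ (Nn.factorization 2) ∣ Q := by
      rw [hQeq]; exact Finset.dvd_prod_of_mem _ h2m
    exact dvd_trans (show 2 ^ 2 ∣ 2 ^ Nn.factorization 2 from pow_dvd_pow 2 (hv2 h2Nn)) hdvd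
  have hT4 : 2 ∈ Nn.primeFactors \ m.primeFactors → 4 ∣ T := by
    intro h2t
    have h2Nn : 2 ∣ Nn := Nat.dvd_of_mem_primeFactors (Finset.mem_sdiff.mp h2t).1
    have hdvd : 2 ^ (Nn.factorization 2) ∣ T := by
      rw [hTdef]; exact Finset.dvd_prod_of_mem _ h2t
    exact dvd_trans (show 2 ^ 2 ∣ 2 ^ Nn.factorization 2 from pow_dvd_pow 2 (hv2 h2Nn)) hdvd
  have hxodd : N % 2 = 0 → x % 2 = 1 := by
    intro h2N
    have h2Nn : 2 ∣ Nn := by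
      have : (2:ℤ) ∣ (Nn:ℤ) := by rw [hNn]; omega
      exact_mod_cast this
    by_cases h2m : 2 ∈ m.primeFactors
    · have h4Q : 4 ∣ Q := hQ4 h2m
      have : (4:ℤ) ∣ x + 1 := by
        refine dvd_trans ?_ hQ2
        have : (4:ℤ) ∣ (Q:ℤ) := by exact_mod_cast h4Q
        exact dvd_trans this (dvd_pow_self _ two_ne_zero)
      omega
    · have h2t : 2 ∈ Nn.primeFactors \ m.primeFactors :=
        Finset.mem_sdiff.mpr ⟨Nat.mem_primeFactors.mpr ⟨Nat.prime_two, h2Nn, hNn0⟩, h2m⟩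
      have h4T : (4:ℤ) ∣ (T:ℤ) := by exact_mod_cast hT4 h2t
      have hTx : (2:ℤ) ∣ (Q:ℤ) * x - 1 :=
        dvd_trans (by omega) (dvd_trans (dvd_pow_self _ two_ne_zero) hT2)
      rcases Int.emod_two_eq x with h | h
      · exfalso
        have : (2:ℤ) ∣ (Q:ℤ) * x := Dvd.dvd.mul_left (by omega) _
        omega
      · exact h
  rw [decomp N hN hfund x hx0 hxodd, ← Finset.prod_sdiff hsub, mul_comm]
  unfold chiPart chiCoPart
  congr 1
  · -- p ∣ m : χ_p x = χ_p (-1)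
    refine Finset.prod_congr rfl fun p hp => ?_
    have hpN : p ∈ Nn.primeFactors := hsub hp
    have hpprime : p.Prime := Nat.prime_of_mem_primeFactors hpN
    have hpQ : (p:ℕ) ∣ Q := by
      have hv : 1 ≤ Nn.factorization p :=
        (Nat.Prime.factorization_pos_of_dvd hpprime hNn0 (Nat.dvd_of_mem_primeFactors hpN))
      have : p ^ (Nn.factorization p) ∣ Q := by
        rw [hQeq]; exact Finset.dvd_prod_of_mem _ hp
      exact dvd_trans (by simpa using pow_dvd_pow p hv) this
    by_cases hp2 : p = 2
    · subst hp2
      refine chiP_two_period N ?_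
      -- 8 ∣ -1 - x
      have h4Q : 4 ∣ Q := hQ4 hp
      have h16 : (8:ℤ) ∣ (Q:ℤ)^2 := by
        have : (4:ℤ) ∣ (Q:ℤ) := by exact_mod_cast h4Q
        obtain ⟨c, hc⟩ := this
        exact ⟨2 * c^2, by rw [hc]; ring⟩
      have : (8:ℤ) ∣ x + 1 := dvd_trans h16 hQ2
      omega
    · rw [chiP_odd N p hp2, chiP_odd N p hp2]
      refine jacobiSym.mod_left' ?_
      refine int_mod_eq_of_dvd ?_
      -- p ∣ -1 - x
      have hpx : (p:ℤ) ∣ x + 1 := by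
        refine dvd_trans ?_ hQ2
        exact dvd_trans (by exact_mod_cast hpQ) (dvd_pow_self _ two_ne_zero)
      rw [show (-1 : ℤ) - x = -(x + 1) by ring]
      exact dvd_neg.mpr hpx
  · -- p ∤ m : χ_p x = χ_p Q
    refine Finset.prod_congr rfl fun p hp => ?_
    obtain ⟨hpN, hpm⟩ := Finset.mem_sdiff.mp hp
    have hpprime : p.Prime := Nat.prime_of_mem_primeFactors hpN
    have hpT : p ∣ T := by
      have hv : 1 ≤ Nn.factorization p :=
        (Nat.Prime.factorization_pos_of_dvd hpprime hNn0 (Nat.dvd_of_mem_primeFactors hpN))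
      have : p ^ (Nn.factorization p) ∣ T := by
        rw [hTdef]; exact Finset.dvd_prod_of_mem _ hp
      exact dvd_trans (by simpa using pow_dvd_pow p hv) this
    have hpQ : ¬ p ∣ Q := by
      rw [hQeq]
      exact not_dvd_part p hpprime _ hpm _ fun q hq => Nat.prime_of_mem_primeFactors (hsub hq)
    by_cases hp2 : p = 2
    · subst hp2
      have hQodd : Q % 2 = 1 := by
        rcases Nat.even_or_odd Q with he | ho
        · exact absurd (even_iff_two_dvd.mp he) hpQ
        · exact Nat.odd_iff.mp ho
      have h16 : (8:ℤ) ∣ (T:ℤ)^2 := by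
        have : (4:ℤ) ∣ (T:ℤ) := by exact_mod_cast hT4 hp
        obtain ⟨c, hc⟩ := this
        exact ⟨2 * c^2, by rw [hc]; ring⟩
      have h8 : (8:ℤ) ∣ (Q:ℤ) * x - 1 := dvd_trans h16 hT2
      have hper : chiP N 2 ((Q:ℤ) * x) = chiP N 2 1 := chiP_two_period N (by omega)
      have hmult := chiP_two_mult N ((Q:ℤ)) x
      have hsq := chiP_two_sq N ((Q:ℤ)) (by exact_mod_cast (by omega : (Q:ℤ) % 2 = 1))
      have hone := chiP_two_one N
      calc chiP N 2 x = (chiP N 2 (Q:ℤ) * chiP N 2 (Q:ℤ)) * chiP N 2 x := by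
            rw [hsq, one_mul]
        _ = chiP N 2 (Q:ℤ) * chiP N 2 ((Q:ℤ) * x) := by rw [hmult]; ring
        _ = chiP N 2 (Q:ℤ) := by rw [hper, hone, mul_one]
    · rw [chiP_odd N p hp2, chiP_odd N p hp2]
      have hpdvd : (p:ℤ) ∣ (Q:ℤ) * x - 1 :=
        dvd_trans (by exact_mod_cast hpT) (dvd_trans (dvd_pow_self _ two_ne_zero) hT2)
      have h1 : jacobiSym ((Q:ℤ) * x) p = 1 := by
        rw [jacobiSym.mod_left' (int_mod_eq_of_dvd
          (by rw [show (1:ℤ) - (Q:ℤ)*x = -((Q:ℤ)*x - 1) by ring]; exact dvd_neg.mpr hpdvd))]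
        exact jacobiSym.one_left p
      have hmul : jacobiSym ((Q:ℤ)) p * jacobiSym x p = 1 := by
        rw [← jacobiSym.mul_left]; exact h1
      have hco : Int.gcd ((Q:ℤ)) p = 1 := by
        have : Nat.Coprime p Q := (hpprime.coprime_iff_not_dvd).mpr hpQ
        simpa [Int.gcd, Nat.coprime_comm] using this.symm
      have hsq : jacobiSym ((Q:ℤ)) p * jacobiSym ((Q:ℤ)) p = 1 := by
        have := jacobiSym.sq_one hco
        nlinarith [this]
      calc jacobiSym x p = (jacobiSym ((Q:ℤ)) p * jacobiSym ((Q:ℤ)) p) * jacobiSym x p := by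
            rw [hsq, one_mul]
        _ = jacobiSym ((Q:ℤ)) p * (jacobiSym ((Q:ℤ)) p * jacobiSym x p) := by ring
        _ = jacobiSym ((Q:ℤ)) p := by rw [hmul, mul_one]

lemma den_ne_zero (A : Matrix (Fin 2) (Fin 2) ℝ) (hA : 0 < A.det) {z : ℂ}
    (hz : 0 < z.im) : ((A 1 0 : ℝ) : ℂ) * z + ((A 1 1 : ℝ) : ℂ) ≠ 0 := by
  intro h
  have him : A 1 0 * z.im = 0 := by
    have := congrArg Complex.im h
    simpa using this
  have hc : A 1 0 = 0 := by
    rcases mul_eq_zero.mp him with h' | h'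
    · exact h'
    · exact absurd h' hz.ne'
  have hd : A 1 1 = 0 := by
    rw [hc] at h
    simpa using h
  rw [Matrix.det_fin_two, hc, hd] at hA
  simp at hA
lemma moeb_im (A : Matrix (Fin 2) (Fin 2) ℝ) (hA : 0 < A.det) {z : ℂ} (hz : 0 < z.im) :
    0 < (moeb A z).im := by
  have hden := den_ne_zero A hA hz
  set d : ℂ := ((A 1 0 : ℝ) : ℂ) * z + ((A 1 1 : ℝ) : ℂ) with hd
  have hnsq : 0 < Complex.normSq d := normSq_pos.mpr hden
  have : (moeb A z).im = A.det * z.im / Complex.normSq d := by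
    rw [moeb, Complex.div_im, Matrix.det_fin_two, ← sub_div, hd]
    congr 1
    simp only [Complex.add_re, Complex.add_im, Complex.mul_re, Complex.mul_im,
      Complex.ofReal_re, Complex.ofReal_im]
    ring
  rw [this]
  positivity

lemma den_mul (A B : Matrix (Fin 2) (Fin 2) ℝ) {z : ℂ}
    (hden : ((A 1 0 : ℝ) : ℂ) * z + ((A 1 1 : ℝ) : ℂ) ≠ 0) :
    (((B * A) 1 0 : ℝ) : ℂ) * z + (((B * A) 1 1 : ℝ) : ℂ)
      = (((B 1 0 : ℝ) : ℂ) * (moeb A z) + ((B 1 1 : ℝ) : ℂ))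
        * (((A 1 0 : ℝ) : ℂ) * z + ((A 1 1 : ℝ) : ℂ)) := by
  rw [moeb, add_mul, mul_assoc, div_mul_cancel₀ _ hden]
  simp [Matrix.mul_apply, Fin.sum_univ_two]
  ring

lemma moeb_mul (A B : Matrix (Fin 2) (Fin 2) ℝ) (hA : 0 < A.det) (hB : 0 < B.det)
    {z : ℂ} (hz : 0 < z.im) : moeb B (moeb A z) = moeb (B * A) z := by
  have hdA := den_ne_zero A hA hz
  have hdB := den_ne_zero B hB (moeb_im A hA hz)
  have hdBA : (((B * A) 1 0 : ℝ) : ℂ) * z + (((B * A) 1 1 : ℝ) : ℂ) ≠ 0 := by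
    rw [den_mul A B hdA]
    exact mul_ne_zero hdB hdA
  have hnum : (((B * A) 0 0 : ℝ) : ℂ) * z + (((B * A) 0 1 : ℝ) : ℂ)
      = (((B 0 0 : ℝ) : ℂ) * (moeb A z) + ((B 0 1 : ℝ) : ℂ))
        * (((A 1 0 : ℝ) : ℂ) * z + ((A 1 1 : ℝ) : ℂ)) := by
    rw [moeb, add_mul, mul_assoc, div_mul_cancel₀ _ hdA]
    simp [Matrix.mul_apply, Fin.sum_univ_two]
    ring
  calc moeb B (moeb A z)
      = (((B 0 0 : ℝ) : ℂ) * (moeb A z) + ((B 0 1 : ℝ) : ℂ))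
          / (((B 1 0 : ℝ) : ℂ) * (moeb A z) + ((B 1 1 : ℝ) : ℂ)) := rfl
    _ = ((((B 0 0 : ℝ) : ℂ) * (moeb A z) + ((B 0 1 : ℝ) : ℂ))
          * (((A 1 0 : ℝ) : ℂ) * z + ((A 1 1 : ℝ) : ℂ)))
          / (((((B 1 0 : ℝ) : ℂ) * (moeb A z) + ((B 1 1 : ℝ) : ℂ)))
          * (((A 1 0 : ℝ) : ℂ) * z + ((A 1 1 : ℝ) : ℂ))) :=
        (mul_div_mul_right _ _ hdA).symm
    _ = moeb (B * A) z := by rw [← hnum, ← den_mul A B hdA]; rfl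

lemma slash_slash (k : ℤ) (A B : Matrix (Fin 2) (Fin 2) ℝ) (hA : 0 < A.det)
    (hB : 0 < B.det) (f : ℂ → ℂ) {z : ℂ} (hz : 0 < z.im) :
    slash k A (slash k B f) z = slash k (B * A) f z := by
  have hdA := den_ne_zero A hA hz
  have hdet : (B * A).det = B.det * A.det := Matrix.det_mul B A
  have hrpow : ((B * A).det ^ ((k : ℝ)/2) : ℝ) = (B.det ^ ((k:ℝ)/2)) * (A.det ^ ((k:ℝ)/2)) := by
    rw [hdet, Real.mul_rpow hB.le hA.le]
  rw [slash, slash, slash, moeb_mul A B hA hB hz, den_mul A B hdA, hrpow, mul_zpow]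
  push_cast
  ring

lemma slash_smul (k : ℤ) (r : ℝ) (hr : 0 < r) (A : Matrix (Fin 2) (Fin 2) ℝ)
    (hA : A.det = 1) (f : ℂ → ℂ) (z : ℂ) :
    slash k (r • A) f z = slash k A f z := by
  have hr0 : (r : ℂ) ≠ 0 := by exact_mod_cast hr.ne'
  have hdet : (r • A).det = r ^ (2:ℕ) := by
    rw [Matrix.det_smul, hA, mul_one]
    norm_num
  have hrpow : ((r • A).det ^ ((k : ℝ)/2) : ℝ) = r ^ k := by
    rw [hdet, ← Real.rpow_natCast r 2, ← Real.rpow_mul hr.le, ← Real.rpow_intCast r k]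
    congr 1
    push_cast
    ring
  have hmoeb : moeb (r • A) z = moeb A z := by
    rw [moeb, moeb]
    simp only [Matrix.smul_apply, smul_eq_mul]
    push_cast
    rw [show ((r:ℂ) * (A 0 0) * z + (r:ℂ) * (A 0 1)) = (r:ℂ) * ((A 0 0) * z + (A 0 1)) by ring,
      show ((r:ℂ) * (A 1 0) * z + (r:ℂ) * (A 1 1)) = (r:ℂ) * ((A 1 0) * z + (A 1 1)) by ring,
      mul_div_mul_left _ _ hr0]
  have hden : (((r • A) 1 0 : ℝ) : ℂ) * z + (((r • A) 1 1 : ℝ) : ℂ)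
      = (r : ℂ) * (((A 1 0 : ℝ) : ℂ) * z + ((A 1 1 : ℝ) : ℂ)) := by
    simp only [Matrix.smul_apply, smul_eq_mul]
    push_cast
    ring
  rw [slash, slash, hmoeb, hden, hrpow, mul_zpow, hA]
  rw [Real.one_rpow]
  push_cast [Complex.ofReal_zpow]
  rw [zpow_neg]
  have hzz : (r:ℂ)^k ≠ 0 := zpow_ne_zero k hr0
  field_simp

lemma map_det_int (γ : Matrix (Fin 2) (Fin 2) ℤ) :
    (γ.map (Int.cast : ℤ → ℝ)).det = (γ.det : ℝ) := by
  rw [show γ.map (Int.cast : ℤ → ℝ) = (Int.castRingHom ℝ).mapMatrix γ from rfl]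
  exact (RingHom.map_det (Int.castRingHom ℝ) γ).symm

lemma eta_det (γ : Matrix (Fin 2) (Fin 2) ℤ) (hγ : γ.det = 1) (t : ℕ) :
    (etaMat γ t).det = (t : ℝ) := by
  rw [etaMat, Matrix.det_mul, map_det_int, hγ]
  rw [Matrix.det_fin_two_of]
  push_cast
  ring

theorem stmt13' (N : ℤ) (hN : 1 < N) (hfund : IsFundDisc N) (k : ℤ)
    (f : ℂ → ℂ) (hf : IsWeaklyHol N.toNat k (kron N) f)
    (m : ℕ) (hm : 0 < m) (hmN : (m : ℤ) ∣ N)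
    (γ : Matrix (Fin 2) (Fin 2) ℤ) (hγdet : γ.det = 1)
    (hγS : CongMod ((Npart N m : ℤ) ^ 2) γ !![0, -1; 1, 0])
    (hγI : CongMod ((N / (Npart N m : ℤ)) ^ 2) γ 1) :
    ∀ z ∈ UHP,
      slash k (etaMat γ (Npart N m)) (slash k (etaMat γ (Npart N m)) f) z =
        (chiPart N m (-1) : ℂ) * (chiCoPart N m ((Npart N m : ℤ)) : ℂ) * f z := by
  intro z hz
  have hz' : 0 < z.im := hz
  set Q := Npart N m with hQdef
  -- positivity of Q
  have hNn0 : N.natAbs ≠ 0 := by omega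
  have hmdvd : m ∣ N.natAbs := by
    have := Int.natAbs_dvd_natAbs.mpr hmN
    simpa using this
  have hsub : m.primeFactors ⊆ N.natAbs.primeFactors := Nat.primeFactors_mono hmdvd hNn0
  have hQpos : 0 < Q := by
    rw [hQdef, Npart]
    exact Finset.prod_pos fun p hp =>
      pow_pos (Nat.prime_of_mem_primeFactors (Finset.mem_inter.mp hp).1).pos _
  have hQ0 : ((Q:ℤ)) ≠ 0 := by exact_mod_cast hQpos.ne'
  -- congruence data
  have hS00 : ((Q:ℤ))^2 ∣ γ 0 0 := by simpa using hγS 0 0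
  have hS01 : ((Q:ℤ))^2 ∣ γ 0 1 + 1 := by simpa [sub_neg_eq_add] using hγS 0 1
  have hS10 : ((Q:ℤ))^2 ∣ γ 1 0 - 1 := by simpa using hγS 1 0
  have hS11 : ((Q:ℤ))^2 ∣ γ 1 1 := by simpa using hγS 1 1
  have hI00 : (N / (Q:ℤ))^2 ∣ γ 0 0 - 1 := by simpa using hγI 0 0
  have hI01 : (N / (Q:ℤ))^2 ∣ γ 0 1 := by simpa using hγI 0 1
  have hI10 : (N / (Q:ℤ))^2 ∣ γ 1 0 := by simpa using hγI 1 0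
  have hI11 : (N / (Q:ℤ))^2 ∣ γ 1 1 - 1 := by simpa using hγI 1 1
  -- t = γ 1 1 / Q
  have hQd : (Q:ℤ) ∣ γ 1 1 := dvd_trans (dvd_pow_self _ two_ne_zero) hS11
  set t : ℤ := γ 1 1 / (Q:ℤ) with htdef
  have ht : (Q:ℤ) * t = γ 1 1 := Int.mul_ediv_cancel' hQd
  -- M
  set M : Matrix (Fin 2) (Fin 2) ℤ := γ * !![γ 0 0 * Q, γ 0 1; γ 1 0, t] with hMdef
  have hdetfin : γ.det = γ 0 0 * γ 1 1 - γ 0 1 * γ 1 0 := Matrix.det_fin_two γ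
  have hdet2 : γ 0 0 * γ 1 1 - γ 0 1 * γ 1 0 = 1 := by rw [← hdetfin]; exact hγdet
  have hMdet : M.det = 1 := by
    rw [hMdef, Matrix.det_mul, hγdet, one_mul, Matrix.det_fin_two_of]
    linear_combination γ 0 0 * ht + hdet2
  have hM10 : M 1 0 = γ 1 0 * (γ 0 0 * Q) + γ 1 1 * γ 1 0 := by
    rw [hMdef]
    simp [Matrix.mul_apply, Fin.sum_univ_two]
  have hM11 : M 1 1 = γ 1 0 * γ 0 1 + γ 1 1 * t := by
    rw [hMdef]
    simp [Matrix.mul_apply, Fin.sum_univ_two]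
  -- η² = Q • M
  have hQt : ((Q:ℝ)) * ((t:ℝ)) = ((γ 1 1 : ℤ) : ℝ) := by exact_mod_cast congrArg (Int.cast : ℤ → ℝ) ht
  have heta : etaMat γ Q * etaMat γ Q = (Q:ℝ) • (M.map (Int.cast : ℤ → ℝ)) := by
    ext i j
    fin_cases i <;> fin_cases j <;>
      · simp [etaMat, hMdef, Matrix.mul_apply, Fin.sum_univ_two, Matrix.map_apply,
          Matrix.smul_apply, smul_eq_mul]
        push_cast
        try rw [← hQt]
        ring
  -- slash composition
  have hdeteta : 0 < (etaMat γ Q).det := by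
    rw [eta_det γ hγdet Q]
    exact_mod_cast hQpos
  have hdetM : (M.map (Int.cast : ℤ → ℝ)).det = 1 := by
    rw [map_det_int, hMdet]; norm_num
  have step1 : slash k (etaMat γ Q) (slash k (etaMat γ Q) f) z
      = islash k M f z := by
    rw [slash_slash k _ _ hdeteta hdeteta f hz', heta,
      slash_smul k _ (by exact_mod_cast hQpos) _ hdetM, islash]
  rw [step1]
  -- apply modularity
  have hNtoNat : ((N.toNat : ℤ)) = N := Int.toNat_of_nonneg (by omega)
  have hQeq : Q = ∏ p ∈ m.primeFactors, p ^ (N.natAbs.factorization p) := by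
    rw [hQdef, Npart, Finset.inter_eq_right.mpr hsub]
  have hQT : (∏ p ∈ N.natAbs.primeFactors \ m.primeFactors,
      p ^ (N.natAbs.factorization p)) * Q = N.natAbs := by
    rw [hQeq]; exact prod_part _ hNn0 _ hsub
  have hQdvdN : (Q:ℤ) ∣ N := by
    have h1 : Q ∣ N.natAbs := Dvd.intro_left _ hQT
    have h2 : ((Q:ℤ)) ∣ ((N.natAbs : ℤ)) := Int.natCast_dvd_natCast.mpr h1
    rwa [Int.natAbs_of_nonneg (by omega : (0:ℤ) ≤ N)] at h2
  have hNQT : (Q:ℤ) * (N / (Q:ℤ)) = N := Int.mul_ediv_cancel' hQdvdN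
  have hNdvd : ((N.toNat : ℤ)) ∣ M 1 0 := by
    rw [hNtoNat, hM10]
    have hQdvd : (Q:ℤ) ∣ γ 0 0 * Q + γ 1 1 :=
      dvd_add (Dvd.intro_left _ rfl) hQd
    have hTdvd : (N / (Q:ℤ)) ∣ γ 1 0 := dvd_trans (dvd_pow_self _ two_ne_zero) hI10
    have hmul : (Q:ℤ) * (N / (Q:ℤ)) ∣ (γ 0 0 * Q + γ 1 1) * γ 1 0 :=
      mul_dvd_mul hQdvd hTdvd
    rw [hNQT] at hmul
    have hring : γ 1 0 * (γ 0 0 * (Q:ℤ)) + γ 1 1 * γ 1 0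
        = (γ 0 0 * (Q:ℤ) + γ 1 1) * γ 1 0 := by ring
    rw [hring]
    exact hmul
  have htrans := hf.2.1 M hMdet hNdvd z hz
  have hQ2 : ((Q:ℤ))^2 ∣ M 1 1 + 1 := by
    have hsplitx : M 1 1 + 1 = (γ 1 0 - 1) * γ 0 1 + (γ 0 1 + 1) + γ 1 1 * t := by
      rw [hM11]; ring
    rw [hsplitx]
    exact dvd_add (dvd_add (hS10.mul_right _) hS01) (hS11.mul_right _)
  have hT2 : (N / (Q:ℤ))^2 ∣ (Q:ℤ) * M 1 1 - 1 := by
    have hsplitx : (Q:ℤ) * M 1 1 - 1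
        = ((Q:ℤ) * γ 0 1) * γ 1 0 + (γ 1 1 - 1) * (γ 1 1 + 1) := by
      rw [hM11]; linear_combination γ 1 1 * ht
    rw [hsplitx]
    exact dvd_add (hI10.mul_left _) (hI11.mul_right _)
  have hcv := charval N hN hfund m hm hmN (M 1 1) hQ2 hT2
  rw [htrans, hcv]
  push_cast
  ring

end AuxProofs

/-- for `f ∈ A(N, k, χ_D)` and a positive divisor `m` of the fundamental
discriminant `N`, with `γ_m ∈ SL₂(ℤ)` satisfying `γ_m ≡ S (mod N_m²)` and
`γ_m ≡ I (mod (N/N_m)²)`, one has `f|_k η_m² = χ_m(-1) χ'_m(N_m) f`. -/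
theorem stmt13 (N : ℤ) (hN : 1 < N) (hfund : IsFundDisc N) (k : ℤ)
    (f : ℂ → ℂ) (hf : IsWeaklyHol N.toNat k (kron N) f)
    (m : ℕ) (hm : 0 < m) (hmN : (m : ℤ) ∣ N)
    (γ : Matrix (Fin 2) (Fin 2) ℤ) (hγdet : γ.det = 1)
    (hγS : CongMod ((Npart N m : ℤ) ^ 2) γ !![0, -1; 1, 0])
    (hγI : CongMod ((N / (Npart N m : ℤ)) ^ 2) γ 1) :
    ∀ z ∈ UHP,
      slash k (etaMat γ (Npart N m)) (slash k (etaMat γ (Npart N m)) f) z =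
        (chiPart N m (-1) : ℂ) * (chiCoPart N m ((Npart N m : ℤ)) : ℂ) * f z := by
  exact stmt13' N hN hfund k f hf m hm hmN γ hγdet hγS hγI
end
end

section
/- For every even weight k ≥ 2, fundamental discriminant N > 1 with character χ_D = (N/·), and sign vector δ ∈ {±1}^{ω(N)}, the space of Eisenstein series in M(N, k, χ_D) satisfying the δ-condition is exactly one-dimensional. -/
noncomputable section

open Complex

/-- The Fourier coefficients of the Eisenstein series `E_m` of weight `k`, level `N` and
character `χ_D`: `E_m = δ_{1,m} L(1-k, χ_D) + 2 Σ_{n ≥ 1} (Σ_{d ∣ n} χ_m(n/d) χ'_m(d) d^{k-1}) qⁿ`. -/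
def EmCoeff (N : ℤ) (k : ℤ) (L : ℂ) (m : ℕ) : ℕ → ℂ := fun n =>
  if n = 0 then (if m = 1 then L else 0)
  else 2 * ∑ d ∈ n.divisors,
    (chiPart N m ((n / d : ℕ) : ℤ) : ℂ) * (chiCoPart N m (d : ℤ) : ℂ) * (d : ℂ) ^ (k - 1)

/-- The `δ`-condition on a sequence of Fourier coefficients: `g n = 0` whenever
`χ_p(n) = -δ_p` for some prime `p ∣ N`. -/
def DeltaCond (N : ℤ) (δ : {p : ℕ // p ∈ N.natAbs.primeFactors} → Bool)
    (g : ℕ → ℂ) : Prop :=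
  ∀ n : ℕ, (∃ p : {p : ℕ // p ∈ N.natAbs.primeFactors},
    chiP N (p : ℕ) (n : ℤ) = -(if δ p then 1 else -1)) → g n = 0

/-- The space (of coefficient sequences) of Eisenstein series of level `N`, weight `k`,
character `χ_D` satisfying the `δ`-condition: linear combinations of the basis
`{E_m : m ∣ N, m = N_m}` whose coefficients satisfy the `δ`-condition. -/
def EisSet (N : ℤ) (k : ℤ) (L : ℂ)
    (δ : {p : ℕ // p ∈ N.natAbs.primeFactors} → Bool) : Set (ℕ → ℂ) :=
  {g | (∃ c : ℕ → ℂ, g = fun n =>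
      ∑ m ∈ (N.toNat.divisors.filter fun m => Npart N m = m), c m * EmCoeff N k L m n) ∧
    DeltaCond N δ g}

section Aux
open ZMod


lemma kron_zero_right {c : ℤ} (hc : ¬ (c = 1 ∨ c = -1)) : kron c 0 = 0 := by
  simp [kron, hc]

lemma kron_even {c : ℤ} (hc : c % 2 = 0) {n : ℕ} (hn : 2 ∣ n) (hn0 : n ≠ 0) :
    kron c (n : ℤ) = 0 := by
  have h2 : (n : ℤ).natAbs = n := Int.natAbs_natCast n
  have hv : (n : ℤ).natAbs.factorization 2 ≠ 0 := by
    rw [h2]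
    simpa [Nat.Prime.factorization_pos_of_dvd Nat.prime_two hn0 hn] using
      (Nat.Prime.factorization_pos_of_dvd Nat.prime_two hn0 hn).ne'
  have h0 : kron2 c = 0 := by simp [kron2, hc]
  have hv' : n.factorization 2 ≠ 0 := by rwa [h2] at hv
  simp [kron, hn0, h0, zero_pow hv']

lemma kron_odd_s15 {c : ℤ} {n : ℕ} (hn : ¬ 2 ∣ n) :
    kron c (n : ℤ) = jacobiSym c n := by
  have hn0 : n ≠ 0 := by rintro rfl; exact hn ⟨0, rfl⟩
  have h2 : (n : ℤ).natAbs = n := Int.natAbs_natCast n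
  have hv : (n : ℤ).natAbs.factorization 2 = 0 := by
    rw [h2]; exact Nat.factorization_eq_zero_of_not_dvd hn
  have hne : (n : ℤ) ≠ 0 := by exact_mod_cast hn0
  have hpos : ¬ ((n : ℤ) < 0 ∧ c < 0) := by
    rintro ⟨h, -⟩; omega
  have hv' : n.factorization 2 = 0 := by rwa [h2] at hv
  simp [kron, hne, hn0, hpos, h2, hv']

lemma kron_mul_nat {c : ℤ} (hc : ¬ (c = 1 ∨ c = -1)) (hc2 : c % 2 = 0) (a b : ℕ) :
    kron c ((a * b : ℕ) : ℤ) = kron c (a : ℤ) * kron c (b : ℤ) := by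
  rcases Nat.eq_zero_or_pos a with rfl | ha
  · simp [kron_zero_right hc]
  rcases Nat.eq_zero_or_pos b with rfl | hb
  · simp [kron_zero_right hc]
  by_cases h2a : 2 ∣ a
  · rw [kron_even hc2 (h2a.mul_right b) (by positivity), kron_even hc2 h2a ha.ne', zero_mul]
  by_cases h2b : 2 ∣ b
  · rw [kron_even hc2 (h2b.mul_left a) (by positivity), kron_even hc2 h2b hb.ne', mul_zero]
  have h2ab : ¬ 2 ∣ a * b := by
    intro h
    rcases (Nat.prime_two.dvd_mul).mp h with h | h <;> [exact h2a h; exact h2b h]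
  rw [kron_odd_s15 h2ab, kron_odd_s15 h2a, kron_odd_s15 h2b]
  exact jacobiSym.mul_right' c ha.ne' hb.ne'


lemma chi8_sq_one {n : ℕ} (hn : ¬ 2 ∣ n) : χ₈ (n : ZMod 8) * χ₈ (n : ZMod 8) = 1 := by
  rw [χ₈_nat_eq_if_mod_eight]
  have h2 : n % 2 ≠ 0 := fun h => hn (Nat.dvd_of_mod_eq_zero h)
  by_cases h : n % 8 = 1 ∨ n % 8 = 7 <;> simp [h2, h]

lemma jac_neg_four {n : ℕ} (hn : ¬ 2 ∣ n) : jacobiSym (-4) n = χ₄ (n : ZMod 4) := by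
  have ho : Odd n := Nat.odd_iff.mpr (Nat.two_dvd_ne_zero.mp hn)
  have h4 : (-4 : ℤ) = -1 * (2 * 2) := by norm_num
  rw [h4, jacobiSym.mul_left, jacobiSym.mul_left, jacobiSym.at_neg_one ho,
    jacobiSym.at_two ho, chi8_sq_one hn, mul_one]

lemma jac_eight {n : ℕ} (hn : ¬ 2 ∣ n) : jacobiSym 8 n = χ₈ (n : ZMod 8) := by
  have ho : Odd n := Nat.odd_iff.mpr (Nat.two_dvd_ne_zero.mp hn)
  have h8 : (8 : ℤ) = 2 * (2 * 2) := by norm_num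
  rw [h8, jacobiSym.mul_left, jacobiSym.mul_left, jacobiSym.at_two ho,
    chi8_sq_one hn, mul_one]

lemma jac_neg_eight {n : ℕ} (hn : ¬ 2 ∣ n) : jacobiSym (-8) n = χ₈' (n : ZMod 8) := by
  have ho : Odd n := Nat.odd_iff.mpr (Nat.two_dvd_ne_zero.mp hn)
  have h8 : (-8 : ℤ) = -2 * (2 * 2) := by norm_num
  rw [h8, jacobiSym.mul_left, jacobiSym.mul_left, jacobiSym.at_neg_two ho,
    jacobiSym.at_two ho, chi8_sq_one hn, mul_one]

lemma jac_period8 {c : ℤ} (hc : c = -4 ∨ c = 8 ∨ c = -8) {m n : ℕ}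
    (hm : ¬ 2 ∣ m) (hn : ¬ 2 ∣ n) (h : m % 8 = n % 8) :
    jacobiSym c m = jacobiSym c n := by
  have h4 : m % 4 = n % 4 := by omega
  have h2 : m % 2 = n % 2 := by omega
  rcases hc with rfl | rfl | rfl
  · rw [jac_neg_four hm, jac_neg_four hn, χ₄_nat_eq_if_mod_four, χ₄_nat_eq_if_mod_four, h4, h2]
  · rw [jac_eight hm, jac_eight hn, χ₈_nat_eq_if_mod_eight, χ₈_nat_eq_if_mod_eight, h, h2]
  · rw [jac_neg_eight hm, jac_neg_eight hn, χ₈'_nat_eq_if_mod_eight, χ₈'_nat_eq_if_mod_eight,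
      h, h2]

lemma jac_sq_one {c : ℤ} (hc : c = -4 ∨ c = 8 ∨ c = -8) {n : ℕ} (hn : ¬ 2 ∣ n) :
    jacobiSym c n = 1 ∨ jacobiSym c n = -1 := by
  have h2 : n % 2 ≠ 0 := fun h => hn (Nat.dvd_of_mod_eq_zero h)
  rcases hc with rfl | rfl | rfl
  · rw [jac_neg_four hn, χ₄_nat_eq_if_mod_four]
    by_cases h : n % 4 = 1 <;> simp [h2, h]
  · rw [jac_eight hn, χ₈_nat_eq_if_mod_eight]
    by_cases h : n % 8 = 1 ∨ n % 8 = 7 <;> simp [h2, h]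
  · rw [jac_neg_eight hn, χ₈'_nat_eq_if_mod_eight]
    by_cases h : n % 8 = 1 ∨ n % 8 = 3 <;> simp [h2, h]

lemma jac_one_left' (c : ℤ) : jacobiSym c 1 = 1 := jacobiSym.one_right c

lemma jac_neg_values :
    jacobiSym (-4) 3 = -1 ∧ jacobiSym 8 3 = -1 ∧ jacobiSym (-8) 5 = -1 := by
  refine ⟨?_, ?_, ?_⟩
  · rw [jac_neg_four (by norm_num), χ₄_nat_eq_if_mod_four]; norm_num
  · rw [jac_eight (by norm_num), χ₈_nat_eq_if_mod_eight]; norm_num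
  · rw [jac_neg_eight (by norm_num), χ₈'_nat_eq_if_mod_eight]; norm_num

lemma fund_two {N : ℤ} (hfund : IsFundDisc N) (h2 : (2:ℤ) ∣ N) :
    ∃ c : ℤ, (c = -4 ∨ c = 8 ∨ c = -8) ∧ ∀ n, chiP N 2 n = kron c n := by
  rcases hfund with ⟨h1, -⟩ | ⟨m, rfl, -, hm⟩
  · exact absurd h1 (by omega)
  · have hdiv : (4 * m) / 4 = m := Int.mul_ediv_cancel_left m (by norm_num)
    have e1 : ∀ n, chiP (4 * m) 2 n =
        (if m % 4 = 3 then kron (-4) n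
         else if m % 8 = 2 then kron 8 n
         else if m % 8 = 6 then kron (-8) n else 1) := by
      intro n
      rw [chiP, if_pos rfl, hdiv]
    rcases hm with hm | hm
    · have h8 : m % 8 = 2 ∨ m % 8 = 6 := by omega
      rcases h8 with h8 | h8
      · exact ⟨8, by tauto, fun n => by rw [e1, if_neg (by omega), if_pos h8]⟩
      · exact ⟨-8, by tauto, fun n => by
          rw [e1, if_neg (by omega), if_neg (by omega), if_pos h8]⟩
    · exact ⟨-4, by tauto, fun n => by rw [e1, if_pos hm]⟩

lemma kron_even0 {c : ℤ} (hc : ¬ (c = 1 ∨ c = -1)) (hc2 : c % 2 = 0) {a : ℕ}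
    (h : 2 ∣ a) : kron c (a : ℤ) = 0 := by
  rcases Nat.eq_zero_or_pos a with rfl | ha
  · simpa using kron_zero_right hc
  · exact kron_even hc2 h ha.ne'

lemma c_not_pm {c : ℤ} (hc : c = -4 ∨ c = 8 ∨ c = -8) : ¬ (c = 1 ∨ c = -1) := by
  rcases hc with rfl | rfl | rfl <;> norm_num

lemma c_even {c : ℤ} (hc : c = -4 ∨ c = 8 ∨ c = -8) : c % 2 = 0 := by
  rcases hc with rfl | rfl | rfl <;> norm_num

/-- period of `χ_p` -/
def perP (p : ℕ) : ℕ := if p = 2 then 8 else p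

section ChiP

variable {N : ℤ} {p : ℕ}

lemma chiP_odd_eq (hp2 : p ≠ 2) (n : ℤ) : chiP N p n = jacobiSym n p := if_neg hp2

lemma int_two_dvd (hN : 1 < N) (hp : p ∈ N.natAbs.primeFactors) (hp2 : p = 2) :
    (2:ℤ) ∣ N := by
  subst hp2
  have h := Nat.dvd_of_mem_primeFactors hp
  have h2 : (2:ℤ) ∣ (N.natAbs : ℤ) := Int.natCast_dvd_natCast.mpr h
  rwa [Int.natAbs_of_nonneg (by omega)] at h2

variable (hN : 1 < N) (hfund : IsFundDisc N) (hp : p ∈ N.natAbs.primeFactors)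
include hN hfund hp

lemma chiP_mul (a b : ℕ) :
    chiP N p ((a * b : ℕ) : ℤ) = chiP N p (a : ℤ) * chiP N p (b : ℤ) := by
  by_cases hp2 : p = 2
  · obtain ⟨c, hc, hcc⟩ := fund_two hfund (int_two_dvd hN hp hp2)
    rw [hp2, hcc, hcc, hcc]
    exact kron_mul_nat (c_not_pm hc) (c_even hc) a b
  · rw [chiP_odd_eq hp2, chiP_odd_eq hp2, chiP_odd_eq hp2]
    push_cast
    exact jacobiSym.mul_left _ _ p

lemma chiP_dvd_zero {n : ℕ} (h : p ∣ n) : chiP N p (n : ℤ) = 0 := by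
  by_cases hp2 : p = 2
  · obtain ⟨c, hc, hcc⟩ := fund_two hfund (int_two_dvd hN hp hp2)
    rw [hp2, hcc]
    exact kron_even0 (c_not_pm hc) (c_even hc) (hp2 ▸ h)
  · have pp : p.Prime := Nat.prime_of_mem_primeFactors hp
    haveI : NeZero p := ⟨pp.ne_zero⟩
    rw [chiP_odd_eq hp2]
    refine jacobiSym.eq_zero_iff_not_coprime.mpr ?_
    have : p ∣ Int.gcd (n : ℤ) (p : ℤ) := Nat.dvd_gcd (by simpa using h) (by simp)
    intro hgcd
    rw [hgcd] at this
    exact pp.one_lt.ne' (Nat.eq_one_of_dvd_one this)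

lemma chiP_pm {n : ℕ} (h : ¬ p ∣ n) :
    chiP N p (n : ℤ) = 1 ∨ chiP N p (n : ℤ) = -1 := by
  by_cases hp2 : p = 2
  · obtain ⟨c, hc, hcc⟩ := fund_two hfund (int_two_dvd hN hp hp2)
    rw [hp2, hcc, kron_odd_s15 (hp2 ▸ h)]
    exact jac_sq_one hc (hp2 ▸ h)
  · have pp : p.Prime := Nat.prime_of_mem_primeFactors hp
    rw [chiP_odd_eq hp2]
    refine jacobiSym.eq_one_or_neg_one ?_
    have : Nat.Coprime n p := ((Nat.Prime.coprime_iff_not_dvd pp).mpr h).symm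
    simpa using this

lemma chiP_one : chiP N p ((1 : ℕ) : ℤ) = 1 := by
  by_cases hp2 : p = 2
  · obtain ⟨c, hc, hcc⟩ := fund_two hfund (int_two_dvd hN hp hp2)
    rw [hp2, hcc, kron_odd_s15 (by norm_num)]
    exact jacobiSym.one_right c
  · rw [chiP_odd_eq hp2]
    push_cast
    exact jacobiSym.one_left p

lemma chiP_period {a b : ℕ} (h : a % perP p = b % perP p) :
    chiP N p (a : ℤ) = chiP N p (b : ℤ) := by
  by_cases hp2 : p = 2
  · obtain ⟨c, hc, hcc⟩ := fund_two hfund (int_two_dvd hN hp hp2)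
    rw [hp2, hcc, hcc]
    have h8 : a % 8 = b % 8 := by simpa [perP, hp2] using h
    by_cases h2 : 2 ∣ a
    · have h2b : 2 ∣ b := by omega
      rw [kron_even0 (c_not_pm hc) (c_even hc) h2,
        kron_even0 (c_not_pm hc) (c_even hc) h2b]
    · have h2b : ¬ 2 ∣ b := by omega
      rw [kron_odd_s15 h2, kron_odd_s15 h2b]
      exact jac_period8 hc h2 h2b h8
  · rw [chiP_odd_eq hp2, chiP_odd_eq hp2]
    refine jacobiSym.mod_left' ?_
    have : a % p = b % p := by simpa [perP, hp2] using h
    omega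

lemma chiP_target {t : ℤ} (ht : t = 1 ∨ t = -1) :
    ∃ r : ℕ, 0 < r ∧ Nat.Coprime r (perP p) ∧ chiP N p (r : ℤ) = t := by
  rcases ht with rfl | rfl
  · exact ⟨1, one_pos, Nat.coprime_one_left _, chiP_one hN hfund hp⟩
  by_cases hp2 : p = 2
  · obtain ⟨c, hc, hcc⟩ := fund_two hfund (int_two_dvd hN hp hp2)
    subst hp2
    rcases hc with rfl | rfl | rfl
    · exact ⟨3, by norm_num, by decide, by
        rw [hcc, kron_odd_s15 (by norm_num)]; exact jac_neg_values.1⟩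
    · exact ⟨3, by norm_num, by decide, by
        rw [hcc, kron_odd_s15 (by norm_num)]; exact jac_neg_values.2.1⟩
    · exact ⟨5, by norm_num, by decide, by
        rw [hcc, kron_odd_s15 (by norm_num)]; exact jac_neg_values.2.2⟩
  · have pp : p.Prime := Nat.prime_of_mem_primeFactors hp
    haveI : Fact p.Prime := ⟨pp⟩
    have hchar : ringChar (ZMod p) ≠ 2 := by
      rw [ZMod.ringChar_zmod_n]; exact hp2
    obtain ⟨b, hb⟩ := FiniteField.exists_nonsquare hchar
    have hb0 : b ≠ 0 := fun h => hb (h ▸ ⟨0, by ring⟩)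
    have hval : ((b.val : ℕ) : ZMod p) = b := ZMod.natCast_rightInverse b
    refine ⟨b.val, Nat.pos_of_ne_zero fun h => hb0 (by rw [← hval, h, Nat.cast_zero]), ?_, ?_⟩
    · have hnd : ¬ p ∣ b.val := fun hd => hb0 (by
        rw [← hval, (ZMod.natCast_eq_zero_iff _ _).mpr hd])
      have hcop : Nat.Coprime b.val p := ((pp.coprime_iff_not_dvd).mpr hnd).symm
      simpa [perP, hp2] using hcop
    · rw [chiP_odd_eq hp2, ← jacobiSym.legendreSym.to_jacobiSym]
      exact (legendreSym.eq_neg_one_iff' p).mpr (by rwa [hval])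

end ChiP

lemma coprime_of_modEq {a b n : ℕ} (h : a ≡ b [MOD n]) (hb : Nat.Coprime b n) :
    Nat.Coprime a n := by
  have h' : a % n = b % n := h
  unfold Nat.Coprime at *
  rw [Nat.gcd_comm, Nat.gcd_rec, h', ← Nat.gcd_rec, Nat.gcd_comm]
  exact hb

/-- Realization of any sign pattern by a large prime. -/
lemma exists_prime_chi {N : ℤ} (hN : 1 < N) (hfund : IsFundDisc N) (t : ℕ → ℤ)
    (ht : ∀ p ∈ N.natAbs.primeFactors, t p = 1 ∨ t p = -1) (n₀ : ℕ) :
    ∃ q : ℕ, q.Prime ∧ n₀ < q ∧ ∀ p ∈ N.natAbs.primeFactors, chiP N p (q : ℤ) = t p := by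
  classical
  set P := N.natAbs.primeFactors with hP
  -- choose residues
  have hres : ∀ p ∈ P, ∃ r : ℕ, 0 < r ∧ Nat.Coprime r (perP p) ∧ chiP N p (r : ℤ) = t p :=
    fun p hp => chiP_target hN hfund hp (ht p hp)
  choose r hr1 hr2 hr3 using hres
  set rf : ℕ → ℕ := fun p => if h : p ∈ P then r p h else 1 with hrf
  -- pairwise coprime moduli
  have hprime : ∀ p ∈ P, p.Prime := fun p hp => Nat.prime_of_mem_primeFactors hp
  have hper_pos : ∀ p ∈ P, perP p ≠ 0 := by
    intro p hp
    by_cases h : p = 2 <;> simp [perP, h, (hprime p hp).ne_zero]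
  have hpp : Set.Pairwise (P : Set ℕ) (Function.onFun Nat.Coprime perP) := by
    intro i hi j hj hij
    have pi := hprime i hi
    have pj := hprime j hj
    show Nat.Coprime (perP i) (perP j)
    by_cases hi2 : i = 2
    · have hj2 : j ≠ 2 := fun h => hij (by rw [hi2, h])
      have : Nat.Coprime 2 j := (Nat.coprime_primes Nat.prime_two pj).mpr
        (fun h => hj2 h.symm)
      simpa [perP, hi2, hj2] using Nat.Coprime.pow_left 3 this
    · by_cases hj2 : j = 2
      · have : Nat.Coprime i 2 := (Nat.coprime_primes pi Nat.prime_two).mpr hi2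
        simpa [perP, hi2, hj2] using Nat.Coprime.pow_right 3 this
      · simpa [perP, hi2, hj2] using (Nat.coprime_primes pi pj).mpr hij
  obtain ⟨a, ha⟩ := Nat.chineseRemainderOfFinset rf perP P hper_pos hpp
  set M : ℕ := ∏ p ∈ P, perP p with hM
  have hM0 : M ≠ 0 := Finset.prod_ne_zero_iff.mpr hper_pos
  haveI : NeZero M := ⟨hM0⟩
  have hunit : IsUnit (a : ZMod M) := by
    rw [ZMod.isUnit_iff_coprime]
    refine Nat.Coprime.prod_right fun p hp => ?_
    exact coprime_of_modEq (ha p hp) (by simpa [hrf, hp] using hr2 p hp)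
  obtain ⟨q, hq1, hq2, hq3⟩ := Nat.forall_exists_prime_gt_and_eq_mod hunit n₀
  refine ⟨q, hq2, hq1, ?_⟩
  intro p hp
  have hqa : q ≡ a [MOD M] := (ZMod.natCast_eq_natCast_iff _ _ _).mp (by rw [hq3])
  have hqp : q ≡ rf p [MOD perP p] :=
    (hqa.of_dvd (Finset.dvd_prod_of_mem perP hp)).trans (ha p hp)
  have := chiP_period hN hfund hp (a := q) (b := rf p) hqp
  rw [this]
  simpa [hrf, hp] using hr3 p hp

/-- the unitary divisor of `N` associated to a set `S` of primes -/
def mOf (N : ℤ) (S : Finset ℕ) : ℕ := ∏ p ∈ S, p ^ (N.natAbs.factorization p)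

section Comb

variable {N : ℤ} {S : Finset ℕ}

lemma mOf_primeFactors (hS : S ⊆ N.natAbs.primeFactors) :
    (mOf N S).primeFactors = S := by
  classical
  induction S using Finset.induction_on with
  | empty => simp [mOf]
  | @insert p S hp ih =>
    have hpP : p ∈ N.natAbs.primeFactors := hS (Finset.mem_insert_self p S)
    have hpprime : p.Prime := Nat.prime_of_mem_primeFactors hpP
    have hSP : S ⊆ N.natAbs.primeFactors :=
      fun x hx => hS (Finset.mem_insert_of_mem hx)
    have he : N.natAbs.factorization p ≠ 0 := by
      have := Finsupp.mem_support_iff.mp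
        (by rw [Nat.support_factorization]; exact hpP)
      exact this
    have h1 : mOf N (insert p S) = p ^ (N.natAbs.factorization p) * mOf N S := by
      rw [mOf, Finset.prod_insert hp]; rfl
    have h2 : (mOf N S) ≠ 0 := by
      rw [mOf]
      exact Finset.prod_ne_zero_iff.mpr fun q hq =>
        pow_ne_zero _ (Nat.prime_of_mem_primeFactors (hSP hq)).ne_zero
    rw [h1, Nat.primeFactors_mul (pow_ne_zero _ hpprime.ne_zero) h2,
      Nat.primeFactors_pow _ he, hpprime.primeFactors, ih hSP]
    rfl

lemma mOf_ne_zero (hS : S ⊆ N.natAbs.primeFactors) : mOf N S ≠ 0 :=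
  Finset.prod_ne_zero_iff.mpr fun q hq =>
    pow_ne_zero _ (Nat.prime_of_mem_primeFactors (hS hq)).ne_zero

lemma mOf_dvd (hN : 1 < N) (hS : S ⊆ N.natAbs.primeFactors) :
    mOf N S ∣ N.toNat := by
  have h0 : N.natAbs ≠ 0 := by omega
  have h1 : mOf N N.natAbs.primeFactors = N.natAbs := by
    rw [mOf, ← Nat.support_factorization]
    exact Nat.factorization_prod_pow_eq_self h0
  have h2 : mOf N S ∣ mOf N N.natAbs.primeFactors :=
    Finset.prod_dvd_prod_of_subset _ _ _ hS
  rw [h1] at h2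
  rwa [show N.toNat = N.natAbs by omega]

lemma Npart_eq_mOf (m : ℕ) :
    Npart N m = mOf N (N.natAbs.primeFactors ∩ m.primeFactors) := rfl

lemma mem_mSet (hN : 1 < N) (hS : S ⊆ N.natAbs.primeFactors) :
    mOf N S ∈ N.toNat.divisors.filter fun m => Npart N m = m := by
  rw [Finset.mem_filter, Nat.mem_divisors]
  refine ⟨⟨mOf_dvd hN hS, by omega⟩, ?_⟩
  rw [Npart_eq_mOf, mOf_primeFactors hS, Finset.inter_eq_right.mpr hS]

lemma mOf_of_mem_mSet (hN : 1 < N) {m : ℕ}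
    (hm : m ∈ N.toNat.divisors.filter fun m => Npart N m = m) :
    m.primeFactors ⊆ N.natAbs.primeFactors ∧ mOf N m.primeFactors = m := by
  rw [Finset.mem_filter, Nat.mem_divisors] at hm
  have hNat : N.natAbs = N.toNat := by omega
  have h1 : m.primeFactors ⊆ N.natAbs.primeFactors := by
    rw [hNat]
    exact Nat.primeFactors_mono hm.1.1 hm.1.2
  refine ⟨h1, ?_⟩
  have := hm.2
  rwa [Npart_eq_mOf, Finset.inter_eq_right.mpr h1] at this

lemma sum_mSet_eq_powerset (hN : 1 < N) (f : ℕ → ℂ) :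
    ∑ m ∈ (N.toNat.divisors.filter fun m => Npart N m = m), f m
      = ∑ S ∈ (N.natAbs.primeFactors).powerset, f (mOf N S) := by
  refine Finset.sum_nbij' (fun m => m.primeFactors) (fun S => mOf N S)
    ?_ ?_ ?_ ?_ ?_
  · intro m hm
    exact Finset.mem_powerset.mpr (mOf_of_mem_mSet hN hm).1
  · intro S hS
    exact mem_mSet hN (Finset.mem_powerset.mp hS)
  · intro m hm
    exact (mOf_of_mem_mSet hN hm).2
  · intro S hS
    exact mOf_primeFactors (Finset.mem_powerset.mp hS)
  · intro m hm
    rw [(mOf_of_mem_mSet hN hm).2]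


lemma chiPart_mOf (hS : S ⊆ N.natAbs.primeFactors) (x : ℤ) :
    chiPart N (mOf N S) x = ∏ p ∈ S, chiP N p x := by
  rw [chiPart, mOf_primeFactors hS]

lemma chiCoPart_mOf (hS : S ⊆ N.natAbs.primeFactors) (x : ℤ) :
    chiCoPart N (mOf N S) x = ∏ p ∈ (N.natAbs.primeFactors \ S), chiP N p x := by
  rw [chiCoPart, mOf_primeFactors hS]

/-- Core identity: a linear combination with product weights of the `E_m` coefficients
factors over the primes of `N`. -/
lemma core_identity (hN : 1 < N) {n : ℕ} (hn : n ≠ 0) (k : ℤ) (L : ℂ) (w : ℕ → ℂ) :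
    ∑ S ∈ (N.natAbs.primeFactors).powerset,
        (∏ p ∈ S, w p) * EmCoeff N k L (mOf N S) n
    = 2 * ∑ d ∈ n.divisors, (d : ℂ) ^ (k - 1) *
        ∏ p ∈ N.natAbs.primeFactors,
          ((chiP N p (d : ℤ) : ℂ) + w p * (chiP N p ((n / d : ℕ) : ℤ) : ℂ)) := by
  classical
  have step1 : ∀ S ∈ (N.natAbs.primeFactors).powerset,
      (∏ p ∈ S, w p) * EmCoeff N k L (mOf N S) n
      = ∑ d ∈ n.divisors, 2 *
          ((∏ p ∈ S, w p * (chiP N p ((n / d : ℕ) : ℤ) : ℂ)) *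
            ∏ p ∈ (N.natAbs.primeFactors \ S), (chiP N p (d : ℤ) : ℂ)) *
          (d : ℂ) ^ (k - 1) := by
    intro S hS
    have hS' := Finset.mem_powerset.mp hS
    rw [EmCoeff, if_neg hn, Finset.mul_sum, Finset.mul_sum]
    refine Finset.sum_congr rfl fun d hd => ?_
    rw [chiPart_mOf hS', chiCoPart_mOf hS']
    push_cast
    rw [Finset.prod_mul_distrib]
    ring
  rw [Finset.sum_congr rfl step1, Finset.sum_comm, Finset.mul_sum]
  refine Finset.sum_congr rfl fun d hd => ?_
  have := Finset.prod_add (fun p => w p * (chiP N p ((n / d : ℕ) : ℤ) : ℂ))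
    (fun p => (chiP N p (d : ℤ) : ℂ)) (N.natAbs.primeFactors)
  calc ∑ S ∈ (N.natAbs.primeFactors).powerset, 2 *
          ((∏ p ∈ S, w p * (chiP N p ((n / d : ℕ) : ℤ) : ℂ)) *
            ∏ p ∈ (N.natAbs.primeFactors \ S), (chiP N p (d : ℤ) : ℂ)) *
          (d : ℂ) ^ (k - 1)
      = 2 * ((d : ℂ) ^ (k - 1) * ∑ S ∈ (N.natAbs.primeFactors).powerset,
          ((∏ p ∈ S, w p * (chiP N p ((n / d : ℕ) : ℤ) : ℂ)) *
            ∏ p ∈ (N.natAbs.primeFactors \ S), (chiP N p (d : ℤ) : ℂ))) := by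
        rw [Finset.mul_sum, Finset.mul_sum]
        exact Finset.sum_congr rfl fun S _ => by ring
    _ = 2 * ((d : ℂ) ^ (k - 1) *
          ∏ p ∈ N.natAbs.primeFactors,
            ((chiP N p (d : ℤ) : ℂ) + w p * (chiP N p ((n / d : ℕ) : ℤ) : ℂ))) := by
        rw [← this]
        congr 1
        congr 1
        exact Finset.prod_congr rfl fun p _ => by ring
    _ = _ := by ring

/-- Each divisor term vanishes when the δ-condition is triggered. -/
lemma sum_w_eq_zero (hN : 1 < N) (hfund : IsFundDisc N) {n : ℕ} (hn : n ≠ 0)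
    (k : ℤ) (L : ℂ) (w : ℕ → ℂ) {q : ℕ} (hq : q ∈ N.natAbs.primeFactors)
    {e : ℤ} (he : e = 1 ∨ e = -1) (hwq : w q = (e : ℂ))
    (hchi : chiP N q (n : ℤ) = -e) :
    ∑ S ∈ (N.natAbs.primeFactors).powerset,
        (∏ p ∈ S, w p) * EmCoeff N k L (mOf N S) n = 0 := by
  rw [core_identity hN hn k L w]
  rw [Finset.sum_eq_zero, mul_zero]
  intro d hd
  rw [Nat.mem_divisors] at hd
  have hqn : ¬ q ∣ n := by
    intro h
    rw [chiP_dvd_zero hN hfund hq h] at hchi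
    rcases he with rfl | rfl <;> simp at hchi
  have hqd : ¬ q ∣ d := fun h => hqn (h.trans hd.1)
  have hqnd : ¬ q ∣ (n / d) := fun h => hqn (h.trans (Nat.div_dvd_of_dvd hd.1))
  have hmul : chiP N q (d : ℤ) * chiP N q ((n / d : ℕ) : ℤ) = -e := by
    rw [← chiP_mul hN hfund hq, Nat.mul_div_cancel' hd.1, hchi]
  have hd1 : chiP N q (d : ℤ) = 1 ∨ chiP N q (d : ℤ) = -1 := chiP_pm hN hfund hq hqd
  have hkey : chiP N q (d : ℤ) + e * chiP N q ((n / d : ℕ) : ℤ) = 0 := by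
    rcases hd1 with h1 | h1 <;> rw [h1] at hmul ⊢ <;> rcases he with rfl | rfl <;> omega
  refine mul_eq_zero_of_right _ (Finset.prod_eq_zero hq ?_)
  rw [hwq]
  exact_mod_cast hkey

lemma EmCoeff_prime (hN : 1 < N) (hfund : IsFundDisc N) (k : ℤ) (L : ℂ)
    {q : ℕ} (hq : q.Prime) (hS : S ⊆ N.natAbs.primeFactors) :
    EmCoeff N k L (mOf N S) q
      = 2 * ((∏ p ∈ S, (chiP N p (q : ℤ) : ℂ))
          + (∏ p ∈ (N.natAbs.primeFactors \ S), (chiP N p (q : ℤ) : ℂ)) * (q : ℂ) ^ (k - 1)) := by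
  have hq0 : q ≠ 0 := hq.pos.ne'
  rw [EmCoeff, if_neg hq0, hq.divisors, Finset.sum_pair hq.one_lt.ne]
  rw [chiPart_mOf hS, chiCoPart_mOf hS, chiPart_mOf hS, chiCoPart_mOf hS]
  rw [Nat.div_one, Nat.div_self hq.pos]
  have h1 : ∀ (T : Finset ℕ), T ⊆ N.natAbs.primeFactors →
      (∏ p ∈ T, chiP N p ((1 : ℕ) : ℤ)) = 1 := by
    intro T hT
    exact Finset.prod_eq_one fun p hp => chiP_one hN hfund (hT hp)
  rw [h1 _ (Finset.sdiff_subset), h1 _ (fun x hx => hS hx)]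
  push_cast
  rw [one_zpow]
  ring

/-- the nonvanishing factor -/
lemma one_add_pi_ne_zero {q : ℕ} (hq : 2 ≤ q) {k : ℤ} (hk : 2 ≤ k) {e : ℂ}
    (he : e = 1 ∨ e = -1) : 1 + e * (q : ℂ) ^ (k - 1) ≠ 0 := by
  have hx : (2 : ℝ) ≤ (q : ℝ) ^ (k - 1) := by
    calc (2 : ℝ) ≤ (q : ℝ) := by exact_mod_cast hq
    _ = (q : ℝ) ^ (1 : ℤ) := (zpow_one _).symm
    _ ≤ (q : ℝ) ^ (k - 1) := by
        apply zpow_le_zpow_right₀ (by exact_mod_cast one_le_two.trans (by exact_mod_cast hq))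
        omega
  have hcast : ((q : ℂ) ^ (k - 1)) = (((q : ℝ) ^ (k - 1) : ℝ) : ℂ) := by
    push_cast
    rfl
  rcases he with rfl | rfl
  · rw [one_mul, hcast]
    intro h
    have : (1 + (q : ℝ) ^ (k - 1) : ℝ) = 0 := by exact_mod_cast h
    nlinarith
  · rw [hcast]
    intro h
    have : (1 + (-1) * ((q : ℝ) ^ (k - 1)) : ℝ) = 0 := by
      have : ((1 + (-1) * (((q : ℝ) ^ (k - 1) : ℝ) : ℂ)) : ℂ) = 0 := h
      exact_mod_cast this
    nlinarith

/-- Evaluation of an Eisenstein combination at a prime. -/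
lemma eval_g_prime (hN : 1 < N) (hfund : IsFundDisc N) (k : ℤ) (L : ℂ) (c : ℕ → ℂ)
    {q : ℕ} (hq : q.Prime)
    (hpm : ∀ p ∈ N.natAbs.primeFactors,
      chiP N p (q : ℤ) = 1 ∨ chiP N p (q : ℤ) = -1) :
    ∑ m ∈ (N.toNat.divisors.filter fun m => Npart N m = m), c m * EmCoeff N k L m q
      = 2 * (1 + (∏ p ∈ N.natAbs.primeFactors, (chiP N p (q : ℤ) : ℂ)) * (q : ℂ) ^ (k - 1))
        * ∑ S ∈ (N.natAbs.primeFactors).powerset,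
            c (mOf N S) * ∏ p ∈ S, (chiP N p (q : ℤ) : ℂ) := by
  rw [sum_mSet_eq_powerset hN]
  rw [Finset.mul_sum]
  refine Finset.sum_congr rfl fun S hSmem => ?_
  have hS := Finset.mem_powerset.mp hSmem
  rw [EmCoeff_prime hN hfund k L hq hS]
  have hsd : (∏ p ∈ (N.natAbs.primeFactors \ S), (chiP N p (q : ℤ) : ℂ))
      = (∏ p ∈ N.natAbs.primeFactors, (chiP N p (q : ℤ) : ℂ))
        * ∏ p ∈ S, (chiP N p (q : ℤ) : ℂ) := by
    have h1 : (∏ p ∈ (N.natAbs.primeFactors \ S), (chiP N p (q : ℤ) : ℂ))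
        * ∏ p ∈ S, (chiP N p (q : ℤ) : ℂ)
        = ∏ p ∈ N.natAbs.primeFactors, (chiP N p (q : ℤ) : ℂ) :=
      Finset.prod_sdiff hS
    have h2 : (∏ p ∈ S, (chiP N p (q : ℤ) : ℂ)) * ∏ p ∈ S, (chiP N p (q : ℤ) : ℂ) = 1 := by
      rw [← Finset.prod_mul_distrib]
      refine Finset.prod_eq_one fun p hp => ?_
      rcases hpm p (hS hp) with h | h <;> rw [h] <;> norm_num
    calc (∏ p ∈ (N.natAbs.primeFactors \ S), (chiP N p (q : ℤ) : ℂ))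
        = (∏ p ∈ (N.natAbs.primeFactors \ S), (chiP N p (q : ℤ) : ℂ))
          * ((∏ p ∈ S, (chiP N p (q : ℤ) : ℂ)) * ∏ p ∈ S, (chiP N p (q : ℤ) : ℂ)) := by
          rw [h2, mul_one]
      _ = _ := by rw [← mul_assoc, h1]
  rw [hsd]
  ring

section Fourier

variable {P : Finset ℕ} {u : ℕ → ℂ}

/-- swap of membership indicators in products -/
lemma prod_ite_swap (S E : Finset ℕ) :
    ∏ p ∈ S, (if p ∈ E then (-1 : ℂ) else 1) = ∏ p ∈ E, (if p ∈ S then (-1 : ℂ) else 1) := by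
  rw [Finset.prod_ite_mem, Finset.prod_ite_mem, Finset.inter_comm]

lemma sum_powerset_prod (v : ℕ → ℂ) :
    ∑ E ∈ P.powerset, ∏ p ∈ E, v p = ∏ p ∈ P, (v p + 1) := by
  have h := Finset.prod_add v (fun _ => (1 : ℂ)) P
  simp only [Finset.prod_const_one, mul_one] at h
  exact h.symm

lemma orth {S₀ S : Finset ℕ} (hS0 : S₀ ⊆ P) (hS : S ⊆ P) :
    ∏ p ∈ P, ((if p ∈ S₀ then (-1 : ℂ) else 1) * (if p ∈ S then (-1 : ℂ) else 1) + 1)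
      = if S = S₀ then (2 : ℂ) ^ P.card else 0 := by
  by_cases h : S = S₀
  · subst h
    rw [if_pos rfl, ← Finset.prod_const]
    refine Finset.prod_congr rfl fun p hp => ?_
    by_cases hpS : p ∈ S <;> simp [hpS] <;> norm_num
  · rw [if_neg h]
    have hex : ∃ p ∈ P, (p ∈ S₀ ∧ p ∉ S) ∨ (p ∈ S ∧ p ∉ S₀) := by
      by_contra hc
      push_neg at hc
      refine h (Finset.ext fun p => ⟨?_, ?_⟩)
      · intro hpS
        exact (hc p (hS hpS)).2 hpS
      · intro hp0
        exact (hc p (hS0 hp0)).1 hp0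
    obtain ⟨p, hpP, hp⟩ := hex
    refine Finset.prod_eq_zero hpP ?_
    rcases hp with ⟨h1, h2⟩ | ⟨h1, h2⟩ <;> simp [h1, h2]

/-- Fourier inversion on the group of sign vectors. -/
lemma fourier_inv (hu : ∀ p ∈ P, u p * u p = 1) (A : Finset ℕ → ℂ)
    (hvan : ∀ E ∈ P.powerset, E.Nonempty →
      ∑ S ∈ P.powerset, A S * ∏ p ∈ S, (u p * (if p ∈ E then (-1 : ℂ) else 1)) = 0)
    {S₀ : Finset ℕ} (hS0 : S₀ ∈ P.powerset) :
    A S₀ * (2 : ℂ) ^ P.card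
      = (∑ S ∈ P.powerset, A S * ∏ p ∈ S, u p) * ∏ p ∈ S₀, u p := by
  classical
  have hS0' := Finset.mem_powerset.mp hS0
  have key : ∑ E ∈ P.powerset, (∏ p ∈ E, (if p ∈ S₀ then (-1 : ℂ) else 1)) *
      (∑ S ∈ P.powerset, A S * ∏ p ∈ S, (u p * (if p ∈ E then (-1 : ℂ) else 1)))
      = ∑ S ∈ P.powerset, A S * ∏ p ∈ S, u p := by
    rw [Finset.sum_eq_single_of_mem (∅ : Finset ℕ)
      (Finset.mem_powerset.mpr (Finset.empty_subset P))]
    · simp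
    · intro E hE hEne
      rw [hvan E hE (Finset.nonempty_iff_ne_empty.mpr hEne), mul_zero]
  have expand : ∑ E ∈ P.powerset, (∏ p ∈ E, (if p ∈ S₀ then (-1 : ℂ) else 1)) *
      (∑ S ∈ P.powerset, A S * ∏ p ∈ S, (u p * (if p ∈ E then (-1 : ℂ) else 1)))
      = (A S₀ * ∏ p ∈ S₀, u p) * (2 : ℂ) ^ P.card := by
    calc ∑ E ∈ P.powerset, (∏ p ∈ E, (if p ∈ S₀ then (-1 : ℂ) else 1)) *
          (∑ S ∈ P.powerset, A S * ∏ p ∈ S, (u p * (if p ∈ E then (-1 : ℂ) else 1)))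
        = ∑ E ∈ P.powerset, ∑ S ∈ P.powerset, (A S * ∏ p ∈ S, u p) *
            ∏ p ∈ E, ((if p ∈ S₀ then (-1 : ℂ) else 1) * (if p ∈ S then (-1 : ℂ) else 1)) := by
          refine Finset.sum_congr rfl fun E hE => ?_
          rw [Finset.mul_sum]
          refine Finset.sum_congr rfl fun S hSm => ?_
          rw [Finset.prod_mul_distrib, prod_ite_swap S E, Finset.prod_mul_distrib]
          ring
      _ = ∑ S ∈ P.powerset, (A S * ∏ p ∈ S, u p) *
            ∑ E ∈ P.powerset, ∏ p ∈ E,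
              ((if p ∈ S₀ then (-1 : ℂ) else 1) * (if p ∈ S then (-1 : ℂ) else 1)) := by
          rw [Finset.sum_comm]
          exact Finset.sum_congr rfl fun S _ => (Finset.mul_sum _ _ _).symm
      _ = ∑ S ∈ P.powerset, (if S = S₀ then (A S * ∏ p ∈ S, u p) * (2 : ℂ) ^ P.card else 0) := by
          refine Finset.sum_congr rfl fun S hSm => ?_
          rw [sum_powerset_prod, orth hS0' (Finset.mem_powerset.mp hSm)]
          by_cases h : S = S₀ <;> simp [h]
      _ = (A S₀ * ∏ p ∈ S₀, u p) * (2 : ℂ) ^ P.card := by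
          rw [Finset.sum_ite_eq' P.powerset S₀
            (fun S => (A S * ∏ p ∈ S, u p) * (2 : ℂ) ^ P.card), if_pos hS0]
  have husq : (∏ p ∈ S₀, u p) * ∏ p ∈ S₀, u p = 1 := by
    rw [← Finset.prod_mul_distrib]
    exact Finset.prod_eq_one fun p hp => hu p (hS0' hp)
  have main : (A S₀ * ∏ p ∈ S₀, u p) * (2 : ℂ) ^ P.card
      = ∑ S ∈ P.powerset, A S * ∏ p ∈ S, u p := by
    rw [← key, expand]
  calc A S₀ * (2 : ℂ) ^ P.card
      = ((A S₀ * ∏ p ∈ S₀, u p) * (2 : ℂ) ^ P.card) * ∏ p ∈ S₀, u p := by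
        rw [show ((A S₀ * ∏ p ∈ S₀, u p) * (2 : ℂ) ^ P.card) * ∏ p ∈ S₀, u p
            = (A S₀ * (2 : ℂ) ^ P.card) * ((∏ p ∈ S₀, u p) * ∏ p ∈ S₀, u p) from by ring,
          husq, mul_one]
    _ = (∑ S ∈ P.powerset, A S * ∏ p ∈ S, u p) * ∏ p ∈ S₀, u p := by rw [main]

end Fourier

lemma prod_pm {s : Finset ℕ} {f : ℕ → ℂ} (h : ∀ p ∈ s, f p = 1 ∨ f p = -1) :
    (∏ p ∈ s, f p) = 1 ∨ (∏ p ∈ s, f p) = -1 := by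
  refine Finset.prod_induction f (fun x => x = 1 ∨ x = -1) ?_ (Or.inl rfl) h
  rintro a b (rfl | rfl) (rfl | rfl) <;> norm_num

end Comb
end Aux

/-- for every even weight `k ≥ 2`, fundamental discriminant `N > 1` with
character `χ_D = (N/·)`, and sign vector `δ`, the space of Eisenstein series in
`M(N, k, χ_D)` satisfying the `δ`-condition is exactly one-dimensional. -/
theorem stmt15 (N : ℤ) [NeZero N.toNat] (hN : 1 < N) (hfund : IsFundDisc N) (k : ℤ) (hk : 2 ≤ k)
    (hkeven : Even k)
    (χ : DirichletCharacter ℂ N.toNat)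
    (hχ : ∀ n : ℤ, χ ((n : ZMod N.toNat)) = (kron N n : ℂ))
    (δ : {p : ℕ // p ∈ N.natAbs.primeFactors} → Bool) :
    ∃ g₀ ∈ EisSet N k (DirichletCharacter.LFunction χ ((1 : ℂ) - (k : ℂ))) δ,
      g₀ ≠ 0 ∧
      ∀ g ∈ EisSet N k (DirichletCharacter.LFunction χ ((1 : ℂ) - (k : ℂ))) δ,
        ∃ c : ℂ, g = c • g₀ := by

  classical
  set L := DirichletCharacter.LFunction χ ((1 : ℂ) - (k : ℂ)) with hLdef
  set dZ : ℕ → ℤ := fun p => if h : p ∈ N.natAbs.primeFactors then (if δ ⟨p, h⟩ then 1 else -1) else 1 with hdZ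
  have hdZval : ∀ (p : ℕ) (hp : p ∈ N.natAbs.primeFactors),
      dZ p = (if δ ⟨p, hp⟩ then 1 else -1) := fun p hp => dif_pos hp
  have hdZpm : ∀ p ∈ N.natAbs.primeFactors, dZ p = 1 ∨ dZ p = -1 := by
    intro p hp
    rw [hdZval p hp]
    by_cases hδ : δ ⟨p, hp⟩ <;> simp [hδ]
  set w : ℕ → ℂ := fun p => ((dZ p : ℤ) : ℂ) with hw
  have hww : ∀ p ∈ N.natAbs.primeFactors, w p * w p = 1 := by
    intro p hp
    rcases hdZpm p hp with h | h <;> simp [hw, h]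
  have hwpm : ∀ p ∈ N.natAbs.primeFactors, w p = 1 ∨ w p = -1 := by
    intro p hp
    rcases hdZpm p hp with h | h <;> [left; right] <;> simp [hw, h]
  set c₀ : ℕ → ℂ := fun m => ∏ p ∈ m.primeFactors, w p with hc₀
  set g₀ : ℕ → ℂ := fun n =>
    ∑ m ∈ (N.toNat.divisors.filter fun m => Npart N m = m), c₀ m * EmCoeff N k L m n with hg₀
  have hc₀S : ∀ S ∈ N.natAbs.primeFactors.powerset, c₀ (mOf N S) = ∏ p ∈ S, w p := by
    intro S hS
    rw [hc₀]
    simp only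
    rw [mOf_primeFactors (Finset.mem_powerset.mp hS)]
  -- delta condition for g₀
  have hdelta0 : DeltaCond N δ g₀ := by
    intro n ⟨p, hp⟩
    have hqP : (p : ℕ) ∈ N.natAbs.primeFactors := p.2
    have hchi : chiP N (p : ℕ) (n : ℤ) = -(dZ p) := by
      rw [hp, hdZval p hqP]
    rcases Nat.eq_zero_or_pos n with rfl | hn
    · exfalso
      rw [chiP_dvd_zero hN hfund hqP (dvd_zero _)] at hchi
      rcases hdZpm p hqP with h | h <;> rw [h] at hchi <;> simp at hchi
    · rw [hg₀]
      simp only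
      rw [sum_mSet_eq_powerset hN (fun m => c₀ m * EmCoeff N k L m n)]
      rw [Finset.sum_congr rfl fun S hS => by rw [hc₀S S hS]]
      exact sum_w_eq_zero hN hfund hn.ne' k L w hqP (hdZpm p hqP) rfl hchi
  -- realization of arbitrary sign vectors and evaluation
  have heval : ∀ (c : ℕ → ℂ) (t : ℕ → ℤ), (∀ p ∈ N.natAbs.primeFactors, t p = 1 ∨ t p = -1) →
      ∀ q : ℕ, q.Prime → (∀ p ∈ N.natAbs.primeFactors, chiP N p (q : ℤ) = t p) →
      ∃ u : ℂ, u ≠ 0 ∧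
        ∑ m ∈ (N.toNat.divisors.filter fun m => Npart N m = m), c m * EmCoeff N k L m q
          = u * ∑ S ∈ N.natAbs.primeFactors.powerset, c (mOf N S) * ∏ p ∈ S, ((t p : ℤ) : ℂ) := by
    intro c t ht q hq hqv
    have hpm : ∀ p ∈ N.natAbs.primeFactors, chiP N p (q : ℤ) = 1 ∨ chiP N p (q : ℤ) = -1 := by
      intro p hp
      rw [hqv p hp]
      exact ht p hp
    have hpi : (∏ p ∈ N.natAbs.primeFactors, (chiP N p (q : ℤ) : ℂ)) = 1 ∨
        (∏ p ∈ N.natAbs.primeFactors, (chiP N p (q : ℤ) : ℂ)) = -1 := by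
      refine prod_pm fun p hp => ?_
      rcases hpm p hp with h | h <;> rw [h] <;> norm_num
    refine ⟨2 * (1 + (∏ p ∈ N.natAbs.primeFactors, (chiP N p (q : ℤ) : ℂ)) * (q : ℂ) ^ (k - 1)), ?_, ?_⟩
    · exact mul_ne_zero two_ne_zero (one_add_pi_ne_zero hq.two_le hk hpi)
    · rw [eval_g_prime hN hfund k L c hq hpm]
      congr 1
      refine Finset.sum_congr rfl fun S hS => ?_
      congr 1
      refine Finset.prod_congr rfl fun p hp => ?_
      rw [hqv p (Finset.mem_powerset.mp hS hp)]
  -- g₀ is nonzero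
  have hg0ne : g₀ ≠ 0 := by
    obtain ⟨q, hqprime, hqgt, hqval⟩ := exists_prime_chi hN hfund dZ hdZpm 1
    obtain ⟨u, hu0, hueq⟩ := heval c₀ dZ hdZpm q hqprime hqval
    intro h0
    have hgq : g₀ q = 0 := by rw [h0]; rfl
    rw [hg₀] at hgq
    simp only at hgq
    rw [hueq] at hgq
    have hsum : ∑ S ∈ N.natAbs.primeFactors.powerset, c₀ (mOf N S) * ∏ p ∈ S, ((dZ p : ℤ) : ℂ)
        = (2 : ℂ) ^ N.natAbs.primeFactors.card := by
      have h1 : ∀ S ∈ N.natAbs.primeFactors.powerset,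
          c₀ (mOf N S) * ∏ p ∈ S, ((dZ p : ℤ) : ℂ) = 1 := by
        intro S hS
        rw [hc₀S S hS, ← Finset.prod_mul_distrib]
        exact Finset.prod_eq_one fun p hp => hww p (Finset.mem_powerset.mp hS hp)
      rw [Finset.sum_congr rfl h1]
      simp [Finset.card_powerset]
    rw [hsum] at hgq
    rcases mul_eq_zero.mp hgq with h | h
    · exact hu0 h
    · exact (pow_ne_zero N.natAbs.primeFactors.card two_ne_zero) h
  refine ⟨g₀, ⟨⟨c₀, rfl⟩, hdelta0⟩, hg0ne, ?_⟩
  -- uniqueness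
  rintro g ⟨⟨c, rfl⟩, hdel⟩
  set A : Finset ℕ → ℂ := fun S => c (mOf N S) with hA
  have hvan : ∀ E ∈ N.natAbs.primeFactors.powerset, E.Nonempty →
      ∑ S ∈ N.natAbs.primeFactors.powerset, A S * ∏ p ∈ S, (w p * (if p ∈ E then (-1 : ℂ) else 1)) = 0 := by
    intro E hE ⟨p₀, hp₀⟩
    have hp₀P : p₀ ∈ N.natAbs.primeFactors := Finset.mem_powerset.mp hE hp₀
    set t : ℕ → ℤ := fun p => dZ p * (if p ∈ E then -1 else 1) with hT
    have ht : ∀ p ∈ N.natAbs.primeFactors, t p = 1 ∨ t p = -1 := by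
      intro p hp
      rcases hdZpm p hp with h | h <;> by_cases hpE : p ∈ E <;>
        simp [hT, h, hpE]
    obtain ⟨q, hqprime, hqgt, hqval⟩ := exists_prime_chi hN hfund t ht 1
    obtain ⟨u, hu0, hueq⟩ := heval c t ht q hqprime hqval
    have htrig : chiP N p₀ (q : ℤ) = -(if δ ⟨p₀, hp₀P⟩ then 1 else -1) := by
      rw [hqval p₀ hp₀P]
      show dZ p₀ * (if p₀ ∈ E then -1 else 1) = _
      rw [if_pos hp₀, mul_neg_one]
      congr 1
      exact hdZval p₀ hp₀P
    have hgq := hdel q ⟨⟨p₀, hp₀P⟩, htrig⟩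
    simp only at hgq
    rw [hueq] at hgq
    have hsum0 := (mul_eq_zero.mp hgq).resolve_left hu0
    rw [← hsum0]
    refine Finset.sum_congr rfl fun S hS => ?_
    congr 1
    refine Finset.prod_congr rfl fun p hp => ?_
    rw [hT, hw]
    simp only
    push_cast
    by_cases hpE : p ∈ E <;> simp [hpE]
  have hcard : ((2 : ℂ) ^ N.natAbs.primeFactors.card) ≠ 0 := pow_ne_zero _ two_ne_zero
  set lam : ℂ := (∑ S ∈ N.natAbs.primeFactors.powerset, A S * ∏ p ∈ S, w p) / (2 : ℂ) ^ N.natAbs.primeFactors.card with hlam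
  have hAS : ∀ S ∈ N.natAbs.primeFactors.powerset, A S = lam * ∏ p ∈ S, w p := by
    intro S hS
    have := fourier_inv hww A hvan hS
    rw [hlam]
    field_simp
    calc A S * (2 : ℂ) ^ N.natAbs.primeFactors.card
        = (∑ S ∈ N.natAbs.primeFactors.powerset, A S * ∏ p ∈ S, w p) * ∏ p ∈ S, w p := this
      _ = _ := by ring
  refine ⟨lam, ?_⟩
  funext n
  show _ = lam * g₀ n
  rw [hg₀]
  simp only
  rw [Finset.mul_sum]
  rw [sum_mSet_eq_powerset hN (fun m => c m * EmCoeff N k L m n),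
    sum_mSet_eq_powerset hN (fun m => lam * (c₀ m * EmCoeff N k L m n))]
  refine Finset.sum_congr rfl fun S hS => ?_
  have hAS' : c (mOf N S) = lam * ∏ p ∈ S, w p := hAS S hS
  rw [hc₀S S hS, hAS']
  ring
end
end
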